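/- arXiv:1112.1753 — 10 statements merged into one kernel-verified Lean document; each statement's English description precedes it below -/
import Mathlib

section
/- For every λ ∈ (0,1), the series h_λ(θ) = Σ_{n=0}^∞ (−1)ⁿ ∏_{i=0}^{n−1} tan(g_λⁱ(θ)) converges absolutely and uniformly on compact subsets of [0, π/2) on which all iterates g_λⁱ(θ) stay in a compact subset of [0, π/2). -/
open Real Filter

set_option maxHeartbeats 1000000 in
/-- For `λ ∈ (0,1)`, the series `h_λ(θ) = Σ (−1)ⁿ ∏_{i<n} tan (g_λⁱ θ)` converges
absolutely, and uniformly on every compact subset `K` of `[0, π/2)` on which all the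
iterates `g_λⁱ` stay in a compact subset `K'` of `[0, π/2)`. -/
theorem stmt_4 (l : ℝ) (hl0 : 0 < l) (hl1 : l < 1)
    (K K' : Set ℝ) (hK : IsCompact K) (hK' : IsCompact K')
    (hKsub : K ⊆ Set.Ico 0 (π / 2)) (hK'sub : K' ⊆ Set.Ico 0 (π / 2))
    (hinv : ∀ θ ∈ K, ∀ i : ℕ, (fun θ => l * (π / 2 - θ))^[i] θ ∈ K') :
    (∀ θ ∈ K, Summable fun n : ℕ =>
        |(-1 : ℝ) ^ n * ∏ i ∈ Finset.range n,
          Real.tan ((fun θ => l * (π / 2 - θ))^[i] θ)|) ∧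
    TendstoUniformlyOn
      (fun N θ => ∑ n ∈ Finset.range N, (-1 : ℝ) ^ n * ∏ i ∈ Finset.range n,
          Real.tan ((fun θ => l * (π / 2 - θ))^[i] θ))
      (fun θ => ∑' n : ℕ, (-1 : ℝ) ^ n * ∏ i ∈ Finset.range n,
          Real.tan ((fun θ => l * (π / 2 - θ))^[i] θ))
      atTop K := by
  rcases K.eq_empty_or_nonempty with rfl | ⟨θ₀, hθ₀⟩
  · exact ⟨by simp, tendstoUniformlyOn_empty⟩
  set g : ℝ → ℝ := fun θ => l * (π / 2 - θ) with hgdef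
  have hpi : 0 < π := pi_pos
  have h1l : (0:ℝ) < 1 + l := by linarith
  set p : ℝ := l * π / (2 * (1 + l)) with hpdef
  have hp0 : 0 < p := by positivity
  have hp4 : p < π / 4 := by
    rw [hpdef, div_lt_div_iff₀ (by positivity) (by norm_num)]
    nlinarith
  -- iterates converge to p
  have hiter : ∀ θ : ℝ, ∀ n : ℕ, g^[n] θ - p = (-l) ^ n * (θ - p) := by
    intro θ n
    induction n with
    | zero => simp
    | succ n ih =>
      rw [Function.iterate_succ_apply', pow_succ]
      have hstep : g (g^[n] θ) - p = (g^[n] θ - p) * (-l) := by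
        simp only [hgdef, hpdef]
        field_simp
        ring
      rw [hstep, ih]; ring
  -- set up the comparison constants
  set ε : ℝ := (π / 4 - p) / 2 with hεdef
  have hε0 : 0 < ε := by simp only [hεdef]; linarith
  set q : ℝ := p + ε with hqdef
  have hq4 : q < π / 4 := by simp only [hqdef, hεdef]; linarith
  have hq0 : 0 < q := by positivity
  set r : ℝ := Real.tan q with hrdef
  have hr0 : 0 < r := tan_pos_of_pos_of_lt_pi_div_two hq0 (by linarith)
  have hr1 : r < 1 := by
    have := tan_lt_tan_of_nonneg_of_lt_pi_div_two hq0.le (by linarith) hq4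
    rwa [tan_pi_div_four] at this
  -- choose N so that all iterates beyond N land in [0, q]
  obtain ⟨N, hN⟩ : ∃ N : ℕ, l ^ N < ε / (π / 2) :=
    exists_pow_lt_of_lt_one (by positivity) hl1
  have hclose : ∀ θ ∈ K, ∀ i : ℕ, N ≤ i → g^[i] θ ≤ q := by
    intro θ hθ i hi
    have hθI := hKsub hθ
    have h1 : |g^[i] θ - p| = l ^ i * |θ - p| := by
      rw [hiter, abs_mul, abs_pow, abs_neg, abs_of_pos hl0]
    have h2 : |θ - p| ≤ π / 2 := by
      rw [abs_le]
      constructor <;> [nlinarith [hθI.1, hθI.2] ; nlinarith [hθI.1, hθI.2]]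
    have h3 : l ^ i ≤ l ^ N := pow_le_pow_of_le_one hl0.le hl1.le hi
    have h4 : |g^[i] θ - p| ≤ ε := by
      calc |g^[i] θ - p| = l ^ i * |θ - p| := h1
        _ ≤ l ^ N * (π / 2) := by
            apply mul_le_mul h3 h2 (abs_nonneg _) (by positivity)
        _ ≤ (ε / (π / 2)) * (π / 2) := by nlinarith
        _ = ε := by field_simp
    have := (abs_le.mp h4).2
    simp only [hqdef]; linarith
  -- iterates are in K', hence in [0, π/2), and tan is nonneg on them
  have hmem : ∀ θ ∈ K, ∀ i : ℕ, g^[i] θ ∈ Set.Ico 0 (π / 2) := fun θ hθ i =>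
    hK'sub (hinv θ hθ i)
  have htan_nonneg : ∀ θ ∈ K, ∀ i : ℕ, 0 ≤ Real.tan (g^[i] θ) := fun θ hθ i =>
    tan_nonneg_of_nonneg_of_le_pi_div_two (hmem θ hθ i).1 (hmem θ hθ i).2.le
  -- global bound M on tan over K'
  have hK'ne : K'.Nonempty := ⟨θ₀, hinv θ₀ hθ₀ 0⟩
  have hcont : ContinuousOn Real.tan K' := by
    apply Real.continuousOn_tan.mono
    intro x hx
    have hxI := hK'sub hx
    exact ne_of_gt (Real.cos_pos_of_mem_Ioo ⟨by linarith [hxI.1], hxI.2⟩)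
  obtain ⟨b, hbK, hble'⟩ := hK'.exists_isMaxOn hK'ne hcont
  have hble : ∀ x ∈ K', Real.tan x ≤ Real.tan b := fun x hx => hble' hx
  set M : ℝ := max (Real.tan b) 1 with hMdef
  have hM1 : (1:ℝ) ≤ M := le_max_right _ _
  have hM0 : (0:ℝ) < M := by linarith
  have htanM : ∀ θ ∈ K, ∀ i : ℕ, Real.tan (g^[i] θ) ≤ M := fun θ hθ i =>
    (hble _ (hinv θ hθ i)).trans (le_max_left _ _)
  have htanr : ∀ θ ∈ K, ∀ i : ℕ, N ≤ i → Real.tan (g^[i] θ) ≤ r := by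
    intro θ hθ i hi
    rcases eq_or_lt_of_le (hclose θ hθ i hi) with h | h
    · rw [h]
    · exact (tan_lt_tan_of_nonneg_of_lt_pi_div_two (hmem θ hθ i).1 (by linarith) h).le
  set C : ℝ := M ^ N / r ^ N with hCdef
  have hC0 : 0 < C := by positivity
  -- the key bound
  have hprod_nonneg : ∀ θ ∈ K, ∀ n : ℕ,
      0 ≤ ∏ i ∈ Finset.range n, Real.tan (g^[i] θ) := fun θ hθ n =>
    Finset.prod_nonneg fun i _ => htan_nonneg θ hθ i
  have key : ∀ θ ∈ K, ∀ n : ℕ,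
      (∏ i ∈ Finset.range n, Real.tan (g^[i] θ)) ≤ C * r ^ n := by
    intro θ hθ n
    rcases le_or_gt n N with hn | hn
    · have h1 : (∏ i ∈ Finset.range n, Real.tan (g^[i] θ)) ≤ M ^ n := by
        calc (∏ i ∈ Finset.range n, Real.tan (g^[i] θ))
            ≤ ∏ i ∈ Finset.range n, M :=
              Finset.prod_le_prod (fun i _ => htan_nonneg θ hθ i)
                (fun i _ => htanM θ hθ i)
          _ = M ^ n := by simp
      have h2 : M ^ n ≤ M ^ N := pow_le_pow_right₀ hM1 hn
      have h3 : r ^ N ≤ r ^ n := pow_le_pow_of_le_one hr0.le hr1.le hn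
      have h4 : M ^ N = C * r ^ N := by
        rw [hCdef]; field_simp
      calc (∏ i ∈ Finset.range n, Real.tan (g^[i] θ)) ≤ M ^ N := h1.trans h2
        _ = C * r ^ N := h4
        _ ≤ C * r ^ n := by nlinarith
    · obtain ⟨k, rfl⟩ : ∃ k, n = N + k := ⟨n - N, by omega⟩
      rw [Finset.prod_range_add]
      have h1 : (∏ i ∈ Finset.range N, Real.tan (g^[i] θ)) ≤ M ^ N := by
        calc (∏ i ∈ Finset.range N, Real.tan (g^[i] θ))
            ≤ ∏ i ∈ Finset.range N, M :=
              Finset.prod_le_prod (fun i _ => htan_nonneg θ hθ i)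
                (fun i _ => htanM θ hθ i)
          _ = M ^ N := by simp
      have h2 : (∏ i ∈ Finset.range k, Real.tan (g^[N + i] θ)) ≤ r ^ k := by
        calc (∏ i ∈ Finset.range k, Real.tan (g^[N + i] θ))
            ≤ ∏ i ∈ Finset.range k, r :=
              Finset.prod_le_prod (fun i _ => htan_nonneg θ hθ _)
                (fun i _ => htanr θ hθ _ (by omega))
          _ = r ^ k := by simp
      have heq : C * r ^ (N + k) = M ^ N * r ^ k := by
        rw [hCdef, pow_add]; field_simp
      rw [heq]
      exact mul_le_mul h1 h2
        (Finset.prod_nonneg fun i _ => htan_nonneg θ hθ _) (by positivity)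
  -- bound on the absolute value of the terms
  have habs : ∀ θ ∈ K, ∀ n : ℕ,
      |(-1 : ℝ) ^ n * ∏ i ∈ Finset.range n, Real.tan (g^[i] θ)| ≤ C * r ^ n := by
    intro θ hθ n
    rw [abs_mul, abs_pow, abs_neg, abs_one, one_pow, one_mul,
      abs_of_nonneg (hprod_nonneg θ hθ n)]
    exact key θ hθ n
  have hu : Summable (fun n : ℕ => C * r ^ n) :=
    (summable_geometric_of_lt_one hr0.le hr1).mul_left C
  constructor
  · intro θ hθ
    exact Summable.of_nonneg_of_le (fun n => abs_nonneg _) (habs θ hθ) hu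
  · exact tendstoUniformlyOn_tsum_nat hu fun n θ hθ => by
      simpa only [Real.norm_eq_abs] using habs θ hθ n
end

section
/- The function h_λ defined by h_λ(θ) = Σ_{n=0}^∞ (−1)ⁿ ∏_{i=0}^{n−1} tan(g_λⁱ(θ)) satisfies the functional equation h_λ(θ) = 1 − h_λ(g_λ(θ))·tan θ for all θ ∈ [0, π/2) for which both sides are defined. -/
open Real

/-- The function `h_λ(θ) = Σ (−1)ⁿ ∏_{i<n} tan (g_λⁱ θ)` satisfies the functional
equation `h_λ(θ) = 1 − h_λ(g_λ θ) · tan θ` for all `θ ∈ [0, π/2)` where both sides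
are defined (i.e. where the defining series converge). -/
theorem stmt_5 (l : ℝ) (hl0 : 0 < l) (hl1 : l < 1) (θ : ℝ)
    (hθ : θ ∈ Set.Ico 0 (π / 2)) :
    let g : ℝ → ℝ := fun x => l * (π / 2 - x)
    let h : ℝ → ℝ := fun x =>
      ∑' n : ℕ, (-1 : ℝ) ^ n * ∏ i ∈ Finset.range n, Real.tan (g^[i] x)
    (Summable fun n : ℕ =>
        (-1 : ℝ) ^ n * ∏ i ∈ Finset.range n, Real.tan (g^[i] θ)) →
    (Summable fun n : ℕ =>
        (-1 : ℝ) ^ n * ∏ i ∈ Finset.range n, Real.tan (g^[i] (g θ))) →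
    h θ = 1 - h (g θ) * Real.tan θ := by
  intro g h hs1 hs2
  have key : ∀ n : ℕ,
      (-1 : ℝ) ^ (n + 1) * ∏ i ∈ Finset.range (n + 1), Real.tan (g^[i] θ)
        = (-Real.tan θ) * ((-1 : ℝ) ^ n *
            ∏ i ∈ Finset.range n, Real.tan (g^[i] (g θ))) := by
    intro n
    rw [Finset.prod_range_succ']
    simp only [Function.iterate_succ_apply, Function.iterate_zero_apply, pow_succ]
    ring
  have h0 : h θ = (1 : ℝ) + ∑' n : ℕ,
      (-1 : ℝ) ^ (n + 1) * ∏ i ∈ Finset.range (n + 1), Real.tan (g^[i] θ) := by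
    have := Summable.tsum_eq_zero_add hs1
    simpa using this
  rw [h0]
  have h1 : (∑' n : ℕ,
      (-1 : ℝ) ^ (n + 1) * ∏ i ∈ Finset.range (n + 1), Real.tan (g^[i] θ))
      = (-Real.tan θ) * h (g θ) := by
    simp only [key]
    rw [tsum_mul_left]
  rw [h1]; ring
end

section
/- For λ ∈ (0,1), let θ_λ = πλ/(2(1+λ)) and let h_λ be the fixed point of the graph transform Γ(h)(θ) = 1 − h(g_λ(θ)) tan θ with g_λ(θ) = λ(π/2 − θ). Then the derivative of h_λ at θ_λ equals h_λ'(θ_λ) = − sec²θ_λ / ((1 − λ tan θ_λ)(1 + tan θ_λ)), which is strictly negative. -/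
open Real

/-- Let `λ ∈ (0,1)`, `θ_λ = πλ/(2(1+λ))`, and let `h` be a fixed point of the graph
transform, i.e. `h θ = 1 − h (g_λ θ) · tan θ` on `(0, π/2)`, differentiable at `θ_λ`.
Then `h'(θ_λ) = − sec² θ_λ / ((1 − λ tan θ_λ)(1 + tan θ_λ)) < 0`. -/
theorem stmt_6 (l : ℝ) (hl0 : 0 < l) (hl1 : l < 1) (h : ℝ → ℝ)
    (hfe : ∀ θ ∈ Set.Ioo 0 (π / 2),
      h θ = 1 - h (l * (π / 2 - θ)) * Real.tan θ)
    (hdiff : DifferentiableAt ℝ h (π * l / (2 * (1 + l)))) :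
    deriv h (π * l / (2 * (1 + l))) =
      -((1 / Real.cos (π * l / (2 * (1 + l))) ^ 2) /
        ((1 - l * Real.tan (π * l / (2 * (1 + l)))) *
          (1 + Real.tan (π * l / (2 * (1 + l)))))) ∧
    deriv h (π * l / (2 * (1 + l))) < 0 := by
  have hπ := Real.pi_pos
  set c := π * l / (2 * (1 + l)) with hc_def
  have hl' : 0 < 1 + l := by linarith
  have hc0 : 0 < c := by positivity
  have hc4 : c < π / 4 := by
    rw [hc_def, div_lt_div_iff₀ (by positivity) (by norm_num)]
    nlinarith
  have hc2 : c < π / 2 := by nlinarith [Real.pi_pos]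
  have hc_mem : c ∈ Set.Ioo 0 (π / 2) := ⟨hc0, hc2⟩
  have hfix : l * (π / 2 - c) = c := by rw [hc_def]; field_simp; ring
  have hcos : Real.cos c ≠ 0 := by
    exact ne_of_gt (Real.cos_pos_of_mem_Ioo ⟨by linarith, hc2⟩)
  have htan0 : 0 < Real.tan c := Real.tan_pos_of_pos_of_lt_pi_div_two hc0 hc2
  have htan1 : Real.tan c < 1 := by
    have := Real.tan_lt_tan_of_nonneg_of_lt_pi_div_two (le_of_lt hc0)
      (by linarith [Real.pi_pos] : π / 4 < π / 2) hc4
    rwa [Real.tan_pi_div_four] at this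
  have hlt : l * Real.tan c < 1 := by nlinarith
  -- value of h at c
  have hval : h c * (1 + Real.tan c) = 1 := by
    have := hfe c hc_mem
    rw [hfix] at this
    nlinarith [this]
  -- derivative computation
  have hsec : 0 < 1 / Real.cos c ^ 2 := by positivity
  have hg : HasDerivAt (fun θ : ℝ => l * (π / 2 - θ)) (-l) c := by
    have : HasDerivAt (fun θ : ℝ => π / 2 - θ) (-1) c := by
      simpa using (hasDerivAt_id c).const_sub (π / 2)
    simpa using this.const_mul l
  have hcomp : HasDerivAt (fun θ => h (l * (π / 2 - θ))) (deriv h c * (-l)) c := by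
    have hh : HasDerivAt h (deriv h c) (l * (π / 2 - c)) := by
      rw [hfix]; exact hdiff.hasDerivAt
    exact hh.comp c hg
  have htan : HasDerivAt Real.tan (1 / Real.cos c ^ 2) c := Real.hasDerivAt_tan hcos
  have hF : HasDerivAt (fun θ => 1 - h (l * (π / 2 - θ)) * Real.tan θ)
      (-(deriv h c * (-l) * Real.tan c + h (l * (π / 2 - c)) * (1 / Real.cos c ^ 2))) c := by
    simpa using ((hcomp.mul htan).const_sub 1)
  have heq : h =ᶠ[nhds c] fun θ => 1 - h (l * (π / 2 - θ)) * Real.tan θ := by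
    filter_upwards [Ioo_mem_nhds hc0 hc2] with θ hθ using hfe θ hθ
  have hderiv : deriv h c =
      -(deriv h c * (-l) * Real.tan c + h (l * (π / 2 - c)) * (1 / Real.cos c ^ 2)) := by
    exact heq.deriv_eq.trans hF.deriv
  rw [hfix] at hderiv
  have hkey : deriv h c = -((1 / Real.cos c ^ 2) /
      ((1 - l * Real.tan c) * (1 + Real.tan c))) := by
    have hne : (1 - l * Real.tan c) * (1 + Real.tan c) ≠ 0 := by nlinarith
    rw [← neg_div, eq_div_iff hne]
    linear_combination (1 + Real.tan c) * hderiv - (1 / Real.cos c ^ 2) * hval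
  refine ⟨hkey, ?_⟩
  rw [hkey]
  have hP : 0 < (1 - l * Real.tan c) * (1 + Real.tan c) := by nlinarith
  have := div_pos hsec hP
  linarith
end

section
/- For every λ ∈ (0,1), h_λ(λθ_λ) < 1, where θ_λ = πλ/(2(1+λ)) and h_λ is the concave function satisfying h_λ(θ) = 1 − h_λ(g_λ(θ)) tan θ with h_λ(θ_λ) = 1/(1 + tan θ_λ) and h_λ'(θ_λ) = − sec²θ_λ/((1 − λ tan θ_λ)(1 + tan θ_λ)). -/
open Real

set_option maxHeartbeats 1000000 in
lemma key_trig (T : ℝ) (h0 : 0 < T) (h4 : T < π / 4) :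
    T * (π - 4 * T) < (π - 2 * T) * (sin T * cos T) - 2 * T * sin T ^ 2 := by
  have hpi1 : (3.141592 : ℝ) < π := pi_gt_d6
  have hpi2 : π < 3.15 := pi_lt_d2
  have hs2 : sin (2 * T) = 2 * (sin T * cos T) := by rw [sin_two_mul]; ring
  have hc2 : cos (2 * T) = 1 - 2 * sin T ^ 2 := by
    have := sin_sq_add_cos_sq T
    rw [cos_two_mul']; nlinarith
  rcases le_or_gt T (2/5) with hle | hgt
  · -- small T case
    have hsin_lt : sin T < T := sin_lt h0
    have hsin_pos : 0 < sin T := sin_pos_of_pos_of_lt_pi h0 (by nlinarith)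
    have hsq : sin T ^ 2 ≤ T ^ 2 := by nlinarith
    have h2T : (2 * T) - (2 * T) ^ 3 / 4 < sin (2 * T) := by
      have h6 := sin_gt_sub_cube (x := 2 * T) (by linarith)
      linarith [pow_pos (show (0:ℝ) < 2 * T by linarith) 3]
    have hA : T - T ^ 3 < sin T * cos T := by nlinarith
    have hpos : (0:ℝ) < π - 2 * T := by linarith
    have hpoly : T * (π - 4 * T) < (π - 2 * T) * (T - T ^ 3) - 2 * T * T ^ 2 := by
      nlinarith [mul_pos h0 h0, sq_nonneg T,
        mul_nonneg (sub_nonneg.2 hle) (sq_nonneg T),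
        mul_nonneg (mul_nonneg (sub_nonneg.2 hle) (sub_nonneg.2 hle)) h0.le]
    have hB : 2 * T * sin T ^ 2 ≤ 2 * T * T ^ 2 :=
      mul_le_mul_of_nonneg_left hsq (by linarith)
    nlinarith [mul_lt_mul_of_pos_left hA hpos]
  · -- T near π/4 case
    set φ : ℝ := π / 4 - T with hφ
    clear_value φ
    have hφT : T = π / 4 - φ := by rw [hφ]; ring
    have hφ0 : 0 < φ := by rw [hφ]; linarith
    have hφle : φ ≤ π / 4 - 2 / 5 := by rw [hφ]; linarith
    have hsin2T : sin (2 * T) = cos (2 * φ) := by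
      rw [show (2:ℝ) * T = π / 2 - 2 * φ by rw [hφT]; ring, sin_pi_div_two_sub]
    have hcos2T : cos (2 * T) = sin (2 * φ) := by
      rw [show (2:ℝ) * T = π / 2 - 2 * φ by rw [hφT]; ring, cos_pi_div_two_sub]
    have hc : 1 - (2 * φ) ^ 2 / 2 < cos (2 * φ) :=
      one_sub_sq_div_two_lt_cos (by positivity)
    have hs : (2 * φ) - (2 * φ) ^ 3 / 4 < sin (2 * φ) := by
      have h6 := sin_gt_sub_cube (x := 2 * φ) (by linarith)
      linarith [pow_pos (show (0:ℝ) < 2 * φ by linarith) 3]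
    have e1 : sin T * cos T = cos (2 * φ) / 2 := by rw [← hsin2T, hs2]; ring
    have e2 : sin T ^ 2 = (1 - sin (2 * φ)) / 2 := by
      rw [← hcos2T]; linarith [hc2]
    rw [e1, e2, hφT]
    have hcoef1 : (0:ℝ) < π / 4 + φ := by linarith
    have hcoef2 : (0:ℝ) < π / 4 - φ := by linarith
    have hb : φ ≤ 39 / 100 := by linarith
    have hA : (π / 4 + φ) * (1 - 2 * φ ^ 2) < (π / 4 + φ) * cos (2 * φ) :=
      mul_lt_mul_of_pos_left (by nlinarith) hcoef1
    have hB : (π / 4 - φ) * (1 - sin (2 * φ)) < (π / 4 - φ) * (1 - (2 * φ - 2 * φ ^ 3)) :=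
      mul_lt_mul_of_pos_left (by nlinarith) hcoef2
    have hg : 0 ≤ (2 - π / 2) * (1 + φ) - (2 + π / 2) * φ ^ 2 + 2 * φ ^ 3 := by
      nlinarith [mul_nonneg hφ0.le (sub_nonneg.2 hb),
        mul_nonneg (mul_nonneg hφ0.le (sub_nonneg.2 hb)) pi_pos.le,
        mul_nonneg (mul_nonneg hφ0.le hφ0.le) hφ0.le,
        mul_nonneg (by linarith : (0:ℝ) ≤ 3.15 - π) hφ0.le]
    nlinarith [mul_nonneg hg hφ0.le, hA, hB]

set_option maxHeartbeats 1000000 in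
/-- For every `λ ∈ (0,1)`, `h_λ(λ θ_λ) < 1`, where `θ_λ = πλ/(2(1+λ))` and `h_λ` is
the concave function satisfying the functional equation
`h(θ) = 1 − h(g_λ θ) tan θ`, with `h(θ_λ) = 1/(1 + tan θ_λ)` and
`h'(θ_λ) = − sec² θ_λ / ((1 − λ tan θ_λ)(1 + tan θ_λ))`. -/
theorem stmt_7 (l : ℝ) (hl0 : 0 < l) (hl1 : l < 1) (h : ℝ → ℝ)
    (hconc : ConcaveOn ℝ (Set.Ico 0 (π / 2)) h)
    (hfe : ∀ θ ∈ Set.Ico 0 (π / 2),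
      h θ = 1 - h (l * (π / 2 - θ)) * Real.tan θ)
    (hval : h (π * l / (2 * (1 + l))) =
      1 / (1 + Real.tan (π * l / (2 * (1 + l)))))
    (hder : HasDerivAt h
      (-((1 / Real.cos (π * l / (2 * (1 + l))) ^ 2) /
        ((1 - l * Real.tan (π * l / (2 * (1 + l)))) *
          (1 + Real.tan (π * l / (2 * (1 + l)))))))
      (π * l / (2 * (1 + l)))) :
    h (l * (π * l / (2 * (1 + l)))) < 1 := by
  have hpi : (0:ℝ) < π := pi_pos
  set T : ℝ := π * l / (2 * (1 + l)) with hTdef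
  have h1l : (0:ℝ) < 1 + l := by linarith
  have hT0 : 0 < T := by rw [hTdef]; positivity
  have hT4 : T < π / 4 := by
    rw [hTdef, div_lt_div_iff₀ (by positivity) (by norm_num)]
    nlinarith
  have hT2 : T < π / 2 := by linarith
  have hrel : l * (π - 2 * T) = 2 * T := by
    rw [hTdef]; field_simp; ring
  have hxT : l * T < T := by nlinarith
  have hmem1 : l * T ∈ Set.Ico 0 (π / 2) := ⟨by positivity, by linarith⟩
  have hmem2 : T ∈ Set.Ico 0 (π / 2) := ⟨hT0.le, hT2⟩
  -- trig facts
  have hcos : 0 < cos T := cos_pos_of_mem_Ioo ⟨by linarith, hT2⟩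
  have htpos : 0 < tan T := tan_pos_of_pos_of_lt_pi_div_two hT0 hT2
  have ht1 : tan T < 1 := by
    rw [← tan_pi_div_four]
    exact tan_lt_tan_of_nonneg_of_lt_pi_div_two hT0.le (by linarith) hT4
  have hd1 : 0 < 1 - l * tan T := by nlinarith
  have hd2 : 0 < 1 + tan T := by linarith
  -- tangent line bound from concavity
  have hslope := hconc.le_slope_of_hasDerivAt hmem1 hmem2 hxT hder
  rw [slope_def_field] at hslope
  have hTl : 0 < T - l * T := by linarith
  have hub : h (l * T) ≤ h T + (1 / cos T ^ 2) / ((1 - l * tan T) * (1 + tan T)) * (T - l * T) := by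
    rw [le_div_iff₀ hTl] at hslope
    nlinarith [hslope]
  -- key inequality
  have hπ2T : 0 < π - 2 * T := by linarith
  have hkey := key_trig T hT0 hT4
  have goalK : T - l * T < tan T * (1 - l * tan T) * cos T ^ 2 := by
    have e1 : T * (l * (π - 2 * T)) = T * (2 * T) := by rw [hrel]
    have e2 : sin T ^ 2 * (l * (π - 2 * T)) = sin T ^ 2 * (2 * T) := by rw [hrel]
    have hmul : (π - 2 * T) * (T - l * T) < (π - 2 * T) * (sin T * cos T - l * sin T ^ 2) := by
      nlinarith [hkey, e1, e2]
    have h3 : T - l * T < sin T * cos T - l * sin T ^ 2 :=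
      lt_of_mul_lt_mul_left hmul hπ2T.le
    have e3 : tan T * (1 - l * tan T) * cos T ^ 2 = sin T * cos T - l * sin T ^ 2 := by
      rw [tan_eq_sin_div_cos]; field_simp
    rw [e3]; exact h3
  -- finish
  have hfin : h T + (1 / cos T ^ 2) / ((1 - l * tan T) * (1 + tan T)) * (T - l * T) < 1 := by
    rw [hval]
    have key2 : 1 / cos T ^ 2 / ((1 - l * tan T) * (1 + tan T)) * (T - l * T)
        < tan T / (1 + tan T) := by
      rw [div_div, div_mul_eq_mul_div, one_mul, div_lt_div_iff₀ (by positivity) hd2]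
      nlinarith [mul_lt_mul_of_pos_right goalK hd2]
    have hsum : 1 / (1 + tan T) + tan T / (1 + tan T) = 1 := by field_simp
    linarith
  linarith [hub, hfin]
end

section
/- For each n ≥ 1, set θ_n(λ) = (π/2)·λ(1 − λ)/(1 − λ^{n+2}) and S_n(θ) = Σ_{i=0}^{n} tan(λⁱθ). Then λ ↦ S_n(θ_n(λ)) is strictly increasing on (0,1), vanishes in the limit λ → 0⁺, and exceeds 1 in the limit λ → 1⁻; consequently there is a unique c_n ∈ (0,1) with S_n(θ_n(c_n)) = 1, and S_n(θ_n(λ)) < 1 if and only if λ ∈ (0, c_n). -/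
open Real Filter Finset

noncomputable def sD (n : ℕ) (x : ℝ) : ℝ := ∑ k ∈ range (n+2), x ^ k
noncomputable def sDP (n : ℕ) (x : ℝ) : ℝ := ∑ k ∈ range (n+2), (k : ℝ) * x ^ (k-1)
noncomputable def sPsi (n i : ℕ) (x : ℝ) : ℝ := (π/2) * x^(i+1) / sD n x
noncomputable def sG (n : ℕ) (x : ℝ) : ℝ := ∑ i ∈ range (n+1), Real.tan (sPsi n i x)
noncomputable def sC (n i : ℕ) (x : ℝ) : ℝ :=
  ((π/2) * (((i:ℝ)+1) * x^i) * sD n x - (π/2) * x^(i+1) * sDP n x) / (sD n x)^2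

lemma sD_ge {n : ℕ} {x : ℝ} (hn : 1 ≤ n) (hx0 : 0 < x) : 1 + x + x^2 ≤ sD n x := by
  have h3 : 3 ≤ n + 2 := by omega
  have heq := Finset.sum_range_add_sum_Ico (fun k => x ^ k) h3
  have h2 : (0:ℝ) ≤ ∑ k ∈ Ico 3 (n+2), x ^ k :=
    Finset.sum_nonneg fun k _ => pow_nonneg hx0.le k
  have h1 : ∑ k ∈ range 3, x ^ k = 1 + x + x^2 := by
    simp [Finset.sum_range_succ]
  unfold sD; nlinarith [heq]

lemma sD_pos {n : ℕ} {x : ℝ} (hn : 1 ≤ n) (hx0 : 0 < x) : 0 < sD n x := by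
  nlinarith [sD_ge hn hx0, sq_nonneg x]

lemma sD_ge_3x {n : ℕ} {x : ℝ} (hn : 1 ≤ n) (hx0 : 0 < x) : 3 * x ≤ sD n x := by
  nlinarith [sD_ge hn hx0, sq_nonneg (1 - x)]

lemma sPsi_pos {n i : ℕ} {x : ℝ} (hn : 1 ≤ n) (hx0 : 0 < x) : 0 < sPsi n i x := by
  unfold sPsi
  have := sD_pos hn hx0
  have := Real.pi_pos
  positivity

lemma sPsi_le_psi0 {n i : ℕ} {x : ℝ} (hn : 1 ≤ n) (hx0 : 0 < x) (hx1 : x ≤ 1) :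
    sPsi n i x ≤ sPsi n 0 x := by
  unfold sPsi
  have hD := sD_pos hn hx0
  have hp : x ^ (i+1) ≤ x ^ (0+1) := pow_le_pow_of_le_one hx0.le hx1 (by omega)
  have hpi := Real.pi_pos
  gcongr

lemma sPsi0_le {n : ℕ} {x : ℝ} (hn : 1 ≤ n) (hx0 : 0 < x) : sPsi n 0 x ≤ π / 6 := by
  unfold sPsi
  have hD := sD_pos hn hx0
  have h3 := sD_ge_3x hn hx0
  rw [div_le_iff₀ hD]
  have hpi := Real.pi_pos
  nlinarith

lemma sPsi_lt_pi2 {n i : ℕ} {x : ℝ} (hn : 1 ≤ n) (hx0 : 0 < x) (hx1 : x ≤ 1) :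
    sPsi n i x < π / 2 := by
  have := (sPsi_le_psi0 (i := i) hn hx0 hx1).trans (sPsi0_le hn hx0)
  have hpi := Real.pi_pos
  linarith

lemma cos_sPsi_pos {n i : ℕ} {x : ℝ} (hn : 1 ≤ n) (hx0 : 0 < x) (hx1 : x ≤ 1) :
    0 < Real.cos (sPsi n i x) :=
  Real.cos_pos_of_mem_Ioo ⟨by linarith [sPsi_pos (i := i) hn hx0, Real.pi_pos],
    sPsi_lt_pi2 hn hx0 hx1⟩

lemma tan_sq_mono {n i : ℕ} {x : ℝ} (hn : 1 ≤ n) (hx0 : 0 < x) (hx1 : x ≤ 1) :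
    Real.tan (sPsi n i x) ^ 2 ≤ Real.tan (sPsi n 0 x) ^ 2 := by
  have h1 : 0 ≤ Real.tan (sPsi n i x) :=
    Real.tan_nonneg_of_nonneg_of_le_pi_div_two (le_of_lt (sPsi_pos hn hx0))
      (le_of_lt (sPsi_lt_pi2 hn hx0 hx1))
  have h2 : Real.tan (sPsi n i x) ≤ Real.tan (sPsi n 0 x) := by
    rcases eq_or_lt_of_le (sPsi_le_psi0 (i := i) hn hx0 hx1) with h | h
    · rw [h]
    · exact le_of_lt (Real.tan_lt_tan_of_nonneg_of_lt_pi_div_two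
        (le_of_lt (sPsi_pos hn hx0)) (sPsi_lt_pi2 hn hx0 hx1) h)
  nlinarith

lemma sDP_eq (n : ℕ) (x : ℝ) : sDP n x = ∑ i ∈ range (n+1), ((i:ℝ)+1) * x ^ i := by
  unfold sDP
  rw [Finset.sum_range_succ' (fun k => (k:ℝ) * x ^ (k-1)) (n+1)]
  simp

lemma sD_eq (n : ℕ) (x : ℝ) : sD n x = (∑ i ∈ range (n+1), x ^ (i+1)) + 1 := by
  unfold sD
  rw [Finset.sum_range_succ' (fun k => x ^ k) (n+1)]
  simp

lemma x_mul_sDP (n : ℕ) (x : ℝ) : x * sDP n x = ∑ k ∈ range (n+2), (k:ℝ) * x ^ k := by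
  unfold sDP
  rw [Finset.mul_sum]
  refine Finset.sum_congr rfl fun k _ => ?_
  rcases k with _ | k
  · simp
  · simp only [Nat.add_sub_cancel]; ring

lemma sumC (n : ℕ) (x : ℝ) :
    ∑ i ∈ range (n+1), sC n i x = (π/2) * sDP n x / (sD n x)^2 := by
  unfold sC
  rw [← Finset.sum_div]
  congr 1
  rw [Finset.sum_sub_distrib]
  have h1 : ∑ i ∈ range (n+1), (π/2) * (((i:ℝ)+1) * x^i) * sD n x
      = (π/2) * sDP n x * sD n x := by
    rw [← Finset.sum_mul, ← Finset.mul_sum, ← sDP_eq]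
  have h2 : ∑ i ∈ range (n+1), (π/2) * x^(i+1) * sDP n x
      = (π/2) * (sD n x - 1) * sDP n x := by
    rw [← Finset.sum_mul, ← Finset.mul_sum]
    rw [show (∑ i ∈ range (n+1), x^(i+1)) = sD n x - 1 by rw [sD_eq]; ring]
  rw [h1, h2]; ring

lemma sDP_ge_one {n : ℕ} {x : ℝ} (hx0 : 0 < x) : 1 ≤ sDP n x := by
  rw [sDP_eq]
  have h0 : ((0:ℕ) ∈ range (n+1)) := Finset.mem_range.2 (by omega)
  have := Finset.single_le_sum (f := fun i : ℕ => ((i:ℝ)+1) * x ^ i)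
    (fun i _ => by positivity) h0
  simpa using this

lemma E_nonneg {n i : ℕ} {x : ℝ} (hi : i ≤ n) (hx0 : 0 < x) :
    0 ≤ ((i:ℝ)+1) * sD n x - x * sDP n x + x^(i+2) * sDP n x := by
  have e1 := x_mul_sDP n x
  have e2 : x^(i+2) * sDP n x = ∑ j ∈ range (n+2), (j:ℝ) * x ^ (j+i+1) := by
    unfold sDP
    rw [Finset.mul_sum]
    refine Finset.sum_congr rfl fun k _ => ?_
    rcases k with _ | k
    · simp
    · simp only [Nat.add_sub_cancel]
      rw [show k+1+i+1 = (i+2)+k by omega, pow_add]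
      ring
  have e3 : ((i:ℝ)+1) * sD n x = ∑ k ∈ range (n+2), ((i:ℝ)+1) * x ^ k := by
    unfold sD; rw [Finset.mul_sum]
  rw [e1, e2, e3, ← Finset.sum_sub_distrib]
  have hsplit : ∑ k ∈ range (n+2), (((i:ℝ)+1) * x ^ k - (k:ℝ) * x ^ k)
      = (∑ k ∈ range (i+2), (((i:ℝ)+1) - k) * x ^ k)
        + ∑ k ∈ Ico (i+2) (n+2), (((i:ℝ)+1) - k) * x ^ k := by
    rw [Finset.sum_range_add_sum_Ico _ (by omega : i+2 ≤ n+2)]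
    exact Finset.sum_congr rfl fun k _ => by ring
  have hA : 0 ≤ ∑ k ∈ range (i+2), (((i:ℝ)+1) - k) * x ^ k := by
    refine Finset.sum_nonneg fun k hk => ?_
    have hk' : k ≤ i + 1 := by simpa [Nat.lt_succ_iff] using Finset.mem_range.1 hk
    have : (k:ℝ) ≤ (i:ℝ) + 1 := by exact_mod_cast hk'
    have := pow_nonneg hx0.le k
    nlinarith
  have hS : ∑ k ∈ Ico (i+2) (n+2), (((i:ℝ)+1) - k) * x ^ k
      = - ∑ j ∈ range (n-i), ((j:ℝ)+1) * x ^ (j+i+2) := by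
    rw [Finset.sum_Ico_eq_sum_range]
    rw [show n+2-(i+2) = n-i by omega, ← Finset.sum_neg_distrib]
    refine Finset.sum_congr rfl fun j _ => ?_
    rw [show i+2+j = j+i+2 by omega]
    push_cast
    ring
  have hT : ∑ j ∈ range (n+2), (j:ℝ) * x ^ (j+i+1)
      = ∑ j ∈ range (n+1), ((j:ℝ)+1) * x ^ (j+i+2) := by
    rw [Finset.sum_range_succ' (fun j => (j:ℝ) * x ^ (j+i+1)) (n+1)]
    simp only [Nat.cast_zero, zero_mul, add_zero, Nat.cast_add, Nat.cast_one]
    refine Finset.sum_congr rfl fun j _ => by rw [show j+1+i+1 = j+i+2 by omega]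
  have hST : ∑ j ∈ range (n-i), ((j:ℝ)+1) * x ^ (j+i+2)
      ≤ ∑ j ∈ range (n+1), ((j:ℝ)+1) * x ^ (j+i+2) := by
    refine Finset.sum_le_sum_of_subset_of_nonneg
      (Finset.range_subset_range.2 (by omega)) fun j _ _ => ?_
    positivity
  rw [hsplit, hT, hS]
  linarith [hA, hST]

lemma tan0_sq_le {n : ℕ} {x : ℝ} (hn : 1 ≤ n) (hx0 : 0 < x) :
    Real.tan (sPsi n 0 x) ^ 2 ≤ π^2/3 * x^2 / (sD n x)^2 := by
  set ψ := sPsi n 0 x with hψ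
  have hψ0 : 0 < ψ := sPsi_pos hn hx0
  have hψ6 : ψ ≤ π / 6 := sPsi0_le hn hx0
  have hpi := Real.pi_pos
  have hcos : Real.cos (π/6) ≤ Real.cos ψ :=
    Real.cos_le_cos_of_nonneg_of_le_pi hψ0.le (by linarith) hψ6
  have hsqrt3 : Real.sqrt 3 ^ 2 = 3 := Real.sq_sqrt (by norm_num)
  have hsqrt3' : (1:ℝ) ≤ Real.sqrt 3 := by nlinarith [Real.sqrt_nonneg 3]
  have hcos2 : (3:ℝ)/4 ≤ Real.cos ψ ^ 2 := by
    rw [Real.cos_pi_div_six] at hcos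
    nlinarith
  have hsin0 : 0 ≤ Real.sin ψ := Real.sin_nonneg_of_nonneg_of_le_pi hψ0.le (by linarith)
  have hsin : Real.sin ψ ≤ ψ := Real.sin_le hψ0.le
  have hsinsq : Real.sin ψ ^ 2 ≤ ψ ^ 2 := by nlinarith
  have hmain : Real.sin ψ ^ 2 / Real.cos ψ ^ 2 ≤ ψ^2 / (3/4) :=
    div_le_div₀ (sq_nonneg ψ) hsinsq (by norm_num) hcos2
  have hD := sD_pos hn hx0
  have heq : ψ^2 / (3/4) = π^2/3 * x^2 / (sD n x)^2 := by
    rw [hψ]; unfold sPsi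
    rw [pow_one]
    field_simp
    ring
  rw [Real.tan_eq_sin_div_cos, div_pow]
  rw [heq] at hmain
  exact hmain

lemma hasDerivAt_sD (n : ℕ) (x : ℝ) : HasDerivAt (sD n) (sDP n x) x := by
  unfold sD sDP
  exact HasDerivAt.fun_sum fun k _ => hasDerivAt_pow k x

lemma hasDerivAt_sPsi (n i : ℕ) {x : ℝ} (hD : sD n x ≠ 0) :
    HasDerivAt (sPsi n i) (sC n i x) x := by
  have h1 : HasDerivAt (fun y : ℝ => (π/2) * y ^ (i+1)) ((π/2) * (((i:ℝ)+1) * x^i)) x := by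
    have := (hasDerivAt_pow (i+1) x).const_mul (π/2)
    simpa [Nat.add_sub_cancel] using this
  exact h1.div (hasDerivAt_sD n x) hD

lemma hasDerivAt_sG {n : ℕ} {x : ℝ} (hn : 1 ≤ n) (hx0 : 0 < x) (hx1 : x ≤ 1) :
    HasDerivAt (sG n)
      (∑ i ∈ range (n+1), (1 / Real.cos (sPsi n i x) ^ 2) * sC n i x) x := by
  unfold sG
  refine HasDerivAt.fun_sum fun i _ => ?_
  have hcos : Real.cos (sPsi n i x) ≠ 0 := (cos_sPsi_pos hn hx0 hx1).ne'
  exact (Real.hasDerivAt_tan hcos).comp x (hasDerivAt_sPsi n i (sD_pos hn hx0).ne')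

lemma key_pos {n : ℕ} {x : ℝ} (hn : 1 ≤ n) (hx0 : 0 < x) (hx1 : x < 1) :
    0 < ∑ i ∈ range (n+1), (1 / Real.cos (sPsi n i x) ^ 2) * sC n i x := by
  have hD := sD_pos hn hx0
  have hDP := sDP_ge_one (n := n) hx0
  have hpi := Real.pi_pos
  set t0 : ℝ := Real.tan (sPsi n 0 x) with ht0
  have per : ∀ i ∈ range (n+1),
      sC n i x - t0^2 * ((π/2) * x^(2*i+2) * sDP n x / (sD n x)^2)
        ≤ (1 / Real.cos (sPsi n i x) ^ 2) * sC n i x := by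
    intro i hi
    have hin : i ≤ n := by simpa [Nat.lt_succ_iff] using Finset.mem_range.1 hi
    have hcos := cos_sPsi_pos (i := i) hn hx0 hx1.le
    have hw : 1 / Real.cos (sPsi n i x) ^ 2 = 1 + Real.tan (sPsi n i x) ^ 2 := by
      rw [Real.tan_eq_sin_div_cos, div_pow]
      field_simp
      linarith [Real.sin_sq_add_cos_sq (sPsi n i x)]
    have hM : 0 ≤ (π/2) * x^(2*i+2) * sDP n x / (sD n x)^2 := by positivity
    have hcM : 0 ≤ sC n i x + (π/2) * x^(2*i+2) * sDP n x / (sD n x)^2 := by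
      have hE := E_nonneg hin hx0
      have hnum : 0 ≤ ((π/2) * (((i:ℝ)+1) * x^i) * sD n x - (π/2) * x^(i+1) * sDP n x)
          + (π/2) * x^(2*i+2) * sDP n x := by
        have hfac : ((π/2) * (((i:ℝ)+1) * x^i) * sD n x - (π/2) * x^(i+1) * sDP n x)
            + (π/2) * x^(2*i+2) * sDP n x
            = (π/2) * x^i * (((i:ℝ)+1) * sD n x - x * sDP n x + x^(i+2) * sDP n x) := by
          rw [show 2*i+2 = i + (i+2) by omega, pow_add, pow_succ]
          ring
        rw [hfac]
        positivity
      unfold sC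
      rw [← add_div]
      positivity
    have h1 : 0 ≤ Real.tan (sPsi n i x) ^ 2 := sq_nonneg _
    have h2 : Real.tan (sPsi n i x) ^ 2 ≤ t0^2 := tan_sq_mono hn hx0 hx1.le
    rw [hw]
    nlinarith [mul_nonneg h1 hcM, mul_nonneg (sub_nonneg.2 h2) hM]
  have hsum := Finset.sum_le_sum per
  rw [Finset.sum_sub_distrib, sumC] at hsum
  have hMsum : ∑ i ∈ range (n+1), t0^2 * ((π/2) * x^(2*i+2) * sDP n x / (sD n x)^2)
      = t0^2 * ((π/2) * sDP n x / (sD n x)^2) * ∑ i ∈ range (n+1), x^(2*i+2) := by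
    rw [Finset.mul_sum]
    refine Finset.sum_congr rfl fun i _ => by ring
  rw [hMsum] at hsum
  set Q : ℝ := (π/2) * sDP n x / (sD n x)^2 with hQ
  have hQpos : 0 < Q := by rw [hQ]; positivity
  set S2 : ℝ := ∑ i ∈ range (n+1), x^(2*i+2) with hS2
  have hS2nn : 0 ≤ S2 := Finset.sum_nonneg fun i _ => by positivity
  have hx24 : x^2 * S2 = ∑ i ∈ range (n+1), x^(2*i+4) := by
    rw [hS2, Finset.mul_sum]
    exact Finset.sum_congr rfl fun i _ => by ring
  have hle : ∑ i ∈ range (n+1), x^(2*i+4) ≤ sD n x - 1 := by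
    have h : ∀ i ∈ range (n+1), x^(2*i+4) ≤ x^(i+1) := fun i _ =>
      pow_le_pow_of_le_one hx0.le hx1.le (by omega)
    calc ∑ i ∈ range (n+1), x^(2*i+4) ≤ ∑ i ∈ range (n+1), x^(i+1) :=
          Finset.sum_le_sum h
      _ = sD n x - 1 := by rw [sD_eq]; ring
  have hfin : π^2/3 * (sD n x - 1) < (sD n x)^2 := by
    have hpilt := Real.pi_lt_d2
    have hD1 : x ≤ sD n x - 1 := by nlinarith [sD_ge hn hx0, sq_nonneg x]
    have hDm1 : 0 < sD n x - 1 := by linarith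
    have hpisq : π^2 < 10 := by nlinarith
    have h1 : π^2/3*(sD n x - 1) < 4*(sD n x - 1) := by
      nlinarith [mul_pos hDm1 (show (0:ℝ) < 4 - π^2/3 by nlinarith)]
    have h2 : 4*(sD n x - 1) ≤ (sD n x)^2 := by nlinarith [sq_nonneg (sD n x - 2)]
    linarith
  have htS : t0^2 * S2 < 1 := by
    have ht0le := tan0_sq_le hn hx0
    have step1 : t0^2 * S2 ≤ (π^2/3 * x^2 / (sD n x)^2) * S2 :=
      mul_le_mul_of_nonneg_right ht0le hS2nn
    have step2 : (π^2/3 * x^2 / (sD n x)^2) * S2 = (π^2/3) * (x^2 * S2) / (sD n x)^2 := by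
      ring
    have step3 : (π^2/3) * (x^2 * S2) / (sD n x)^2 < 1 := by
      rw [hx24, div_lt_one (by positivity)]
      calc π^2/3 * ∑ i ∈ range (n+1), x^(2*i+4) ≤ π^2/3 * (sD n x - 1) := by
            apply mul_le_mul_of_nonneg_left hle (by positivity)
        _ < (sD n x)^2 := hfin
    linarith [step2 ▸ step1]
  have hfinal : 0 < Q - t0^2 * Q * S2 := by nlinarith
  linarith

lemma sG_mono {n : ℕ} (hn : 1 ≤ n) : StrictMonoOn (sG n) (Set.Ioo 0 1) := by
  apply strictMonoOn_of_deriv_pos (convex_Ioo 0 1)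
  · intro x hx
    exact (hasDerivAt_sG hn hx.1 hx.2.le).continuousAt.continuousWithinAt
  · rw [interior_Ioo]
    intro x hx
    rw [(hasDerivAt_sG hn hx.1 hx.2.le).deriv]
    exact key_pos hn hx.1 hx.2
/-- For `n ≥ 1`, with `θ_n(λ) = (π/2) λ(1−λ)/(1−λ^{n+2})` and
`S_n(θ) = Σ_{i≤n} tan(λⁱθ)`, the map `λ ↦ S_n(θ_n(λ))` is strictly increasing on
`(0,1)`, tends to `0` as `λ → 0⁺`, exceeds `1` in the limit `λ → 1⁻`; hence there is
a unique `c_n ∈ (0,1)` with `S_n(θ_n(c_n)) = 1`, and `S_n(θ_n(λ)) < 1 ↔ λ < c_n`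
on `(0,1)`. -/
theorem stmt_8 (n : ℕ) (hn : 1 ≤ n) :
    let θ : ℝ → ℝ := fun l => (π / 2) * l * (1 - l) / (1 - l ^ (n + 2))
    let F : ℝ → ℝ := fun l => ∑ i ∈ Finset.range (n + 1), Real.tan (l ^ i * θ l)
    StrictMonoOn F (Set.Ioo 0 1) ∧
    Tendsto F (nhdsWithin 0 (Set.Ioi 0)) (nhds 0) ∧
    (∃ L : ℝ, 1 < L ∧ Tendsto F (nhdsWithin 1 (Set.Iio 1)) (nhds L)) ∧
    ∃! c : ℝ, c ∈ Set.Ioo (0 : ℝ) 1 ∧ F c = 1 ∧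
      ∀ l ∈ Set.Ioo (0 : ℝ) 1, (F l < 1 ↔ l < c) := by
  intro θ F
  have hpi := Real.pi_pos
  -- F agrees with sG on (0,1)
  have hFeq : ∀ l ∈ Set.Ioo (0:ℝ) 1, F l = sG n l := by
    intro l hl
    have hl0 : 0 < l := hl.1
    have hl1 : l < 1 := hl.2
    have hD := sD_pos hn hl0
    have hgeom : (1:ℝ) - l^(n+2) = (1-l) * sD n l := by
      unfold sD
      linear_combination (geom_sum_mul l (n+2))
    have h1l : (1:ℝ) - l ≠ 0 := by linarith
    show (∑ i ∈ Finset.range (n + 1), Real.tan (l ^ i * ((π / 2) * l * (1 - l) / (1 - l ^ (n + 2))))) = sG n l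
    unfold sG
    refine Finset.sum_congr rfl fun i _ => ?_
    congr 1
    rw [hgeom]
    unfold sPsi
    field_simp
    ring
  -- strict monotonicity
  have hmono : StrictMonoOn F (Set.Ioo 0 1) := by
    intro a ha b hb hab
    rw [hFeq a ha, hFeq b hb]
    exact sG_mono hn ha hb hab
  -- limit at 0+
  have hθ0 : (π / 2) * (0:ℝ) * (1 - 0) / (1 - (0:ℝ) ^ (n + 2)) = 0 := by
    norm_num
  have htend0 : Tendsto F (nhdsWithin 0 (Set.Ioi 0)) (nhds 0) := by
    have hcont : ContinuousAt F 0 := by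
      have hterm : ∀ i : ℕ, ContinuousAt
          (fun l : ℝ => Real.tan (l ^ i * ((π / 2) * l * (1 - l) / (1 - l ^ (n + 2))))) 0 := by
        intro i
        have hθc : ContinuousAt (fun l : ℝ => (π / 2) * l * (1 - l) / (1 - l ^ (n + 2))) 0 := by
          apply ContinuousAt.div
          · fun_prop
          · fun_prop
          · norm_num
        have hinner : ContinuousAt (fun l : ℝ => l ^ i * ((π / 2) * l * (1 - l) / (1 - l ^ (n + 2)))) 0 :=
          (continuousAt_id.pow i).mul hθc
        exact ContinuousAt.comp (g := Real.tan)
          (Real.continuousAt_tan.2 (by rw [hθ0, mul_zero, Real.cos_zero]; norm_num)) hinner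
      exact tendsto_finset_sum _ fun i _ => hterm i
    have hF0 : F 0 = 0 := by
      show (∑ i ∈ Finset.range (n + 1), Real.tan ((0:ℝ) ^ i * ((π / 2) * 0 * (1 - 0) / (1 - (0:ℝ) ^ (n + 2))))) = 0
      rw [Finset.sum_eq_zero]
      intro i _
      rw [hθ0, mul_zero, Real.tan_zero]
    have := hcont.tendsto
    rw [hF0] at this
    exact this.mono_left nhdsWithin_le_nhds
  -- limit at 1-
  have hsD1 : sD n 1 = (n:ℝ) + 2 := by
    unfold sD; simp
  have hG1 : sG n 1 = ((n:ℝ)+1) * Real.tan ((π/2) / ((n:ℝ)+2)) := by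
    unfold sG sPsi
    rw [hsD1]
    simp [Finset.sum_const, Finset.card_range]
  have hn2 : (0:ℝ) < (n:ℝ) + 2 := by positivity
  have hnR : (1:ℝ) ≤ (n:ℝ) := by exact_mod_cast hn
  have hL1 : 1 < sG n 1 := by
    rw [hG1]
    have ht0 : 0 < (π/2) / ((n:ℝ)+2) := by positivity
    have htp : (π/2) / ((n:ℝ)+2) < π/2 := by
      rw [div_lt_iff₀ hn2]
      nlinarith
    have := Real.lt_tan ht0 htp
    have hgt : 1 < ((n:ℝ)+1) * ((π/2) / ((n:ℝ)+2)) := by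
      have hpigt : (3:ℝ) < π := Real.pi_gt_three
      have heq2 : ((n:ℝ)+1) * ((π/2) / ((n:ℝ)+2)) = ((n:ℝ)+1)*π/(2*((n:ℝ)+2)) := by
        field_simp
      rw [heq2, lt_div_iff₀ (by positivity)]
      nlinarith
    nlinarith [this, hgt, ht0]

  have hGcont1 : ContinuousAt (sG n) 1 := by
    have hterm : ∀ i : ℕ, ContinuousAt (fun x => Real.tan (sPsi n i x)) 1 := by
      intro i
      have hDcont : Continuous (sD n) := by
        unfold sD
        exact continuous_finset_sum _ fun k _ => continuous_pow k
      have hpsicont : ContinuousAt (sPsi n i) 1 := by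
        unfold sPsi
        exact ContinuousAt.div (by fun_prop) hDcont.continuousAt (by rw [hsD1]; positivity)
      exact ContinuousAt.comp (g := Real.tan)
        (Real.continuousAt_tan.2 (cos_sPsi_pos (i := i) hn one_pos le_rfl).ne') hpsicont
    unfold sG
    exact tendsto_finset_sum _ fun i _ => hterm i
  have hIoo1 : Set.Ioo (0:ℝ) 1 ∈ nhdsWithin 1 (Set.Iio 1) :=
    Ioo_mem_nhdsLT_of_mem ⟨zero_lt_one, le_rfl⟩
  have htend1 : Tendsto F (nhdsWithin 1 (Set.Iio 1)) (nhds (sG n 1)) := by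
    have hG : Tendsto (sG n) (nhdsWithin 1 (Set.Iio 1)) (nhds (sG n 1)) :=
      hGcont1.tendsto.mono_left nhdsWithin_le_nhds
    apply hG.congr'
    filter_upwards [hIoo1] with l hl
    exact (hFeq l hl).symm
  refine ⟨hmono, htend0, ⟨sG n 1, hL1, htend1⟩, ?_⟩
  -- existence of b with F b > 1
  have hev1 : ∀ᶠ l in nhdsWithin 1 (Set.Iio 1), 1 < F l :=
    htend1.eventually (eventually_gt_nhds hL1)
  obtain ⟨b, hb1, hbmem⟩ := (hev1.and (eventually_of_mem hIoo1 fun l hl => hl)).exists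
  -- existence of a with F a < 1
  have hIoo0 : Set.Ioo (0:ℝ) b ∈ nhdsWithin 0 (Set.Ioi 0) :=
    Ioo_mem_nhdsGT_of_mem ⟨le_rfl, hbmem.1⟩
  have hev0 : ∀ᶠ l in nhdsWithin 0 (Set.Ioi 0), F l < 1 :=
    htend0.eventually (eventually_lt_nhds zero_lt_one)
  obtain ⟨a, ha1, hamem⟩ := (hev0.and (eventually_of_mem hIoo0 fun l hl => hl)).exists
  have haIoo : a ∈ Set.Ioo (0:ℝ) 1 := ⟨hamem.1, lt_trans hamem.2 hbmem.2⟩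
  -- IVT
  have hcontF : ∀ x ∈ Set.Icc a b, ContinuousWithinAt F (Set.Icc a b) x := by
    intro x hx
    have hxIoo : x ∈ Set.Ioo (0:ℝ) 1 :=
      ⟨lt_of_lt_of_le haIoo.1 hx.1, lt_of_le_of_lt hx.2 hbmem.2⟩
    have hGc : ContinuousAt (sG n) x :=
      (hasDerivAt_sG hn hxIoo.1 hxIoo.2.le).continuousAt
    have : ContinuousAt F x := by
      apply hGc.congr
      filter_upwards [isOpen_Ioo.mem_nhds hxIoo] with y hy
      exact (hFeq y hy).symm
    exact this.continuousWithinAt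
  have hivt := intermediate_value_Ioo (le_of_lt hamem.2) hcontF
  obtain ⟨c, hcab, hFc⟩ := hivt ⟨ha1, hb1⟩
  have hcIoo : c ∈ Set.Ioo (0:ℝ) 1 :=
    ⟨lt_trans haIoo.1 hcab.1, lt_trans hcab.2 hbmem.2⟩
  have hiff : ∀ l ∈ Set.Ioo (0:ℝ) 1, (F l < 1 ↔ l < c) := by
    intro l hl
    constructor
    · intro hFl
      by_contra hcl
      push_neg at hcl
      rcases eq_or_lt_of_le hcl with h | h
      · rw [← h, hFc] at hFl; exact lt_irrefl 1 hFl
      · have := hmono hcIoo hl h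
        rw [hFc] at this
        linarith
    · intro hlc
      have := hmono hl hcIoo hlc
      rwa [hFc] at this
  refine ⟨c, ⟨hcIoo, hFc, hiff⟩, ?_⟩
  rintro c' ⟨hc'Ioo, hFc', hiff'⟩
  have h1 : ¬ (c < c') := by
    rw [← hiff' c hcIoo, hFc]
    exact lt_irrefl 1
  have h2 : ¬ (c' < c) := by
    rw [← hiff c' hc'Ioo, hFc']
    exact lt_irrefl 1
  push_neg at h1 h2
  exact le_antisymm h1 h2
end

section
/- For n ≥ 1, λ ∈ (0,1), and θ_n = (π/2)·λ(1 − λ)/(1 − λ^{n+2}), the inequality Σ_{i=0}^{n−1} tan(λⁱθ_n) + tan(λ⁻¹θ_n) > 1 holds. -/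
open Real

/-- For `n ≥ 1`, `λ ∈ (0,1)`, `θ_n = (π/2) λ(1−λ)/(1−λ^{n+2})`, assuming all the
arguments `λⁱ θ_n` (for `i < n`) and `λ⁻¹ θ_n` lie in `(0, π/2)`, one has
`Σ_{i<n} tan(λⁱ θ_n) + tan(λ⁻¹ θ_n) > 1`. -/
theorem stmt_9 (n : ℕ) (hn : 1 ≤ n) (l : ℝ) (hl0 : 0 < l) (hl1 : l < 1) :
    let θ : ℝ := (π / 2) * l * (1 - l) / (1 - l ^ (n + 2))
    (∀ i < n, l ^ i * θ ∈ Set.Ioo 0 (π / 2)) →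
    l⁻¹ * θ ∈ Set.Ioo 0 (π / 2) →
    1 < (∑ i ∈ Finset.range n, Real.tan (l ^ i * θ)) + Real.tan (l⁻¹ * θ) := by
  intro θ hIoo hinv
  have htan : ∀ i ∈ Finset.range n, l ^ i * θ < Real.tan (l ^ i * θ) := by
    intro i hi
    have h := hIoo i (Finset.mem_range.mp hi)
    exact Real.lt_tan h.1 h.2
  have hsum : (∑ i ∈ Finset.range n, l ^ i * θ) <
      ∑ i ∈ Finset.range n, Real.tan (l ^ i * θ) := by
    refine Finset.sum_lt_sum_of_nonempty ⟨0, Finset.mem_range.mpr (by omega)⟩ htan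
  have hinvtan : l⁻¹ * θ < Real.tan (l⁻¹ * θ) := Real.lt_tan hinv.1 hinv.2
  have key : 1 ≤ (∑ i ∈ Finset.range n, l ^ i * θ) + l⁻¹ * θ := by
    have hden : 0 < 1 - l ^ (n + 2) := by
      have : l ^ (n + 2) < 1 := pow_lt_one₀ hl0.le hl1 (by omega)
      linarith
    have hgeom : (∑ i ∈ Finset.range n, l ^ i * θ) = (1 - l ^ n) / (1 - l) * θ := by
      rw [← Finset.sum_mul, geom_sum_eq (ne_of_lt hl1)]
      congr 1
      rw [div_eq_div_iff (by linarith) (by linarith)]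
      ring
    have hpn : l ^ (n + 1) ≤ l ^ 2 := pow_le_pow_of_le_one hl0.le hl1.le (by omega)
    have hpi : (3.14 : ℝ) < π := by linarith [Real.pi_gt_d6]
    have hθ : θ = (π / 2) * l * (1 - l) / (1 - l ^ (n + 2)) := rfl
    have hdne : (1 - l ^ (n + 2)) ≠ 0 := ne_of_gt hden
    have hlne : l ≠ 0 := ne_of_gt hl0
    have h1l : (1 - l) ≠ 0 := by intro h; linarith
    have hval : (1 - l ^ n) / (1 - l) * θ + l⁻¹ * θ
        = (π / 2) * (1 - l ^ (n + 1)) / (1 - l ^ (n + 2)) := by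
      rw [hθ]
      field_simp
      ring
    have e : l ^ (n + 2) = l ^ (n + 1) * l := by ring
    have hp1 : l ^ (n + 1) < 1 := pow_lt_one₀ hl0.le hl1 (by omega)
    rw [hgeom, hval, le_div_iff₀ hden]
    nlinarith [mul_nonneg (sq_nonneg (1 - l)) (by linarith : (0:ℝ) ≤ 1 + 2 * l),
      mul_nonneg (sub_nonneg.mpr hpn) (by linarith : (0:ℝ) ≤ 3 - 2 * l),
      mul_nonneg (by linarith : (0:ℝ) ≤ π - 3) (by linarith : (0:ℝ) ≤ 1 - l ^ (n + 1))]
  linarith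
end

section
/- For every λ ∈ (0,1) and n ≥ 1, S_{n+1}(θ_{n+1}) > S_n(θ_n), where S_n(θ) = Σ_{i=0}^{n} tan(λⁱθ) and θ_n = (π/2)·λ(1 − λ)/(1 − λ^{n+2}). -/
open Real

/-- Key per-term bound: for `0 ≤ b ≤ a ≤ c ≤ π/6`,
`tan a - tan b ≤ (a - b) / (1 - c^2)`. -/
lemma aux_tan_sub_le {a b c : ℝ} (hb : 0 ≤ b) (hba : b ≤ a) (hac : a ≤ c)
    (hc : c ≤ π / 6) : Real.tan a - Real.tan b ≤ (a - b) / (1 - c ^ 2) := by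
  have hπ := Real.pi_pos
  have hπ315 := Real.pi_lt_d2
  have hc0 : 0 ≤ c := le_trans (le_trans hb hba) hac
  have hc1 : c < 1 := by nlinarith
  have hc2 : 0 < 1 - c ^ 2 := by nlinarith
  have haπ : a < π / 2 := by nlinarith
  have hbπ : b < π / 2 := lt_of_le_of_lt hba haπ
  have hcosa : Real.cos c ≤ Real.cos a :=
    Real.cos_le_cos_of_nonneg_of_le_pi (hb.trans hba) (by linarith) hac
  have hcosb : Real.cos c ≤ Real.cos b :=
    Real.cos_le_cos_of_nonneg_of_le_pi hb (by linarith) (hba.trans hac)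
  have hcc : 1 - c ^ 2 / 2 ≤ Real.cos c := Real.one_sub_sq_div_two_le_cos
  have hcosa0 : 0 < Real.cos a := Real.cos_pos_of_mem_Ioo ⟨by linarith, haπ⟩
  have hcosb0 : 0 < Real.cos b := Real.cos_pos_of_mem_Ioo ⟨by linarith, hbπ⟩
  have h1 : 1 - c ^ 2 / 2 ≤ Real.cos a := le_trans hcc hcosa
  have h2 : 1 - c ^ 2 / 2 ≤ Real.cos b := le_trans hcc hcosb
  have hnn : 0 ≤ 1 - c ^ 2 / 2 := by nlinarith
  have hmm := mul_le_mul h1 h2 hnn hcosa0.le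
  have hprod : 1 - c ^ 2 ≤ Real.cos a * Real.cos b := by nlinarith [sq_nonneg (c ^ 2)]
  have htan : Real.tan a - Real.tan b = Real.sin (a - b) / (Real.cos a * Real.cos b) := by
    rw [Real.tan_eq_sin_div_cos, Real.tan_eq_sin_div_cos, Real.sin_sub]
    field_simp
  rw [htan]
  exact div_le_div₀ (by linarith) (Real.sin_le (by linarith)) hc2 hprod

lemma aux_pi_sq_lt_ten : π ^ 2 < 10 := by
  nlinarith [Real.pi_lt_d2, Real.pi_pos]

set_option maxHeartbeats 1000000 in
/-- For every `λ ∈ (0,1)` and `n ≥ 1`, `S_{n+1}(θ_{n+1}) > S_n(θ_n)`, where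
`S_n(θ) = Σ_{i≤n} tan(λⁱθ)` and `θ_n = (π/2) λ(1−λ)/(1−λ^{n+2})`. -/
theorem stmt_11 (n : ℕ) (hn : 1 ≤ n) (l : ℝ) (hl0 : 0 < l) (hl1 : l < 1) :
    let θ : ℕ → ℝ := fun m => (π / 2) * l * (1 - l) / (1 - l ^ (m + 2))
    let S : ℕ → ℝ → ℝ := fun m x =>
      ∑ i ∈ Finset.range (m + 1), Real.tan (l ^ i * x)
    S n (θ n) < S (n + 1) (θ (n + 1)) := by
  intro θ S
  have hπ := Real.pi_pos
  have hπ315 := Real.pi_lt_d2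
  have h1l : 0 < 1 - l := by linarith
  set C : ℝ := (π / 2) * l * (1 - l) with hC
  have hC0 : 0 < C := by positivity
  set D2 : ℝ := 1 - l ^ (n + 2) with hD2
  set D3 : ℝ := 1 - l ^ (n + 3) with hD3
  have hp2 : l ^ (n + 2) < 1 := pow_lt_one₀ hl0.le hl1 (by omega)
  have hp3 : l ^ (n + 3) < 1 := pow_lt_one₀ hl0.le hl1 (by omega)
  have hD2p : 0 < D2 := by simp only [hD2]; linarith
  have hD3p : 0 < D3 := by simp only [hD3]; linarith
  have hple : l ^ (n + 3) ≤ l ^ (n + 2) :=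
    pow_le_pow_of_le_one hl0.le hl1.le (by omega)
  have hD23 : D2 ≤ D3 := by simp only [hD2, hD3]; linarith
  set a : ℝ := θ n with ha
  set b : ℝ := θ (n + 1) with hb
  have haC : a = C / D2 := rfl
  have hbC : b = C / D3 := by
    show C / (1 - l ^ (n + 1 + 2)) = C / D3
    norm_num [hD3, show n + 1 + 2 = n + 3 by omega]
  have haD : a * D2 = C := by rw [haC, div_mul_cancel₀ C hD2p.ne']
  have hbD : b * D3 = C := by rw [hbC, div_mul_cancel₀ C hD3p.ne']
  have ha0 : 0 < a := by rw [haC]; positivity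
  have hb0 : 0 < b := by rw [hbC]; positivity
  have hba : b ≤ a := by
    rw [haC, hbC]
    exact div_le_div_of_nonneg_left hC0.le hD2p hD23
  have hl3 : l ^ (n + 2) ≤ l ^ 3 := pow_le_pow_of_le_one hl0.le hl1.le (by omega)
  -- a ≤ π/6
  have ha6 : a ≤ π / 6 := by
    rw [haC, div_le_iff₀ hD2p]
    have h3 : 3 * (l * (1 - l)) ≤ D2 := by
      simp only [hD2]
      nlinarith [hl3, pow_nonneg (sub_nonneg.2 hl1.le) 3]
    have := mul_le_mul_of_nonneg_left h3 (le_of_lt (by positivity : (0:ℝ) < π / 6))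
    simp only [hC]
    nlinarith
  have ha1 : a < 1 := by nlinarith
  have ha2 : 0 < 1 - a ^ 2 := by nlinarith
  -- key polynomial inequality: C^2 < (1-l) * D2
  have hM : C ^ 2 < (1 - l) * D2 := by
    have hπsq : π ^ 2 < 10 := aux_pi_sq_lt_ten
    have hq : 0 < 1 + l - 1.5 * l ^ 2 := by nlinarith
    have hx : (0:ℝ) < l ^ 2 * (1 - l) ^ 2 := by positivity
    have h2 : (10 / 4) * (l ^ 2 * (1 - l) ^ 2) < (1 - l) * (1 - l ^ 3) := by
      nlinarith [mul_pos (mul_pos h1l h1l) hq]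
    have h3 : (1 - l) * (1 - l ^ 3) ≤ (1 - l) * D2 := by
      simp only [hD2]
      nlinarith [hl3, h1l]
    have h1 : C ^ 2 ≤ (π ^ 2 / 4) * (l ^ 2 * (1 - l) ^ 2) := by
      simp only [hC]; nlinarith
    nlinarith
  -- K : l * (1 - l^(n+1)) < D2 * (1 - a^2)
  have hK : l * (1 - l ^ (n + 1)) < D2 * (1 - a ^ 2) := by
    have h1 : D2 * (1 - a ^ 2) * D2 = D2 ^ 2 - C ^ 2 := by
      linear_combination (-(a * D2) - C) * haD
    have h2 : l * (1 - l ^ (n + 1)) * D2 = (D2 - (1 - l)) * D2 := by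
      simp only [hD2]
      rw [show n + 2 = n + 1 + 1 by omega, pow_succ]
      ring
    have h3 : (D2 - (1 - l)) * D2 < D2 ^ 2 - C ^ 2 := by nlinarith [hM, hD2p]
    have h4 : l * (1 - l ^ (n + 1)) * D2 < D2 * (1 - a ^ 2) * D2 := by
      rw [h1, h2]; exact h3
    exact lt_of_mul_lt_mul_right h4 hD2p.le
  -- geometric sum
  set G : ℝ := ∑ i ∈ Finset.range (n + 1), l ^ i with hG
  have hG1 : G * (1 - l) = 1 - l ^ (n + 1) := by
    have := geom_sum_mul l (n + 1)
    rw [hG]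
    linear_combination -this
  have hGpos : 0 < G := by
    rw [hG]
    exact Finset.sum_pos (fun i _ => pow_pos hl0 i) (by simp)
  -- sum of differences bound
  have hsum : S n a - S n b ≤ (a - b) / (1 - a ^ 2) * G := by
    have hdiff : S n a - S n b = ∑ i ∈ Finset.range (n + 1),
        (Real.tan (l ^ i * a) - Real.tan (l ^ i * b)) := by
      simp only [S, Finset.sum_sub_distrib]
    rw [hdiff, hG, Finset.mul_sum]
    apply Finset.sum_le_sum
    intro i _
    have hli0 : 0 < l ^ i := pow_pos hl0 i
    have hli1 : l ^ i ≤ 1 := pow_le_one₀ hl0.le hl1.le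
    have h := aux_tan_sub_le (a := l ^ i * a) (b := l ^ i * b) (c := a)
      (by positivity) (by nlinarith) (by nlinarith) ha6
    calc Real.tan (l ^ i * a) - Real.tan (l ^ i * b)
        ≤ (l ^ i * a - l ^ i * b) / (1 - a ^ 2) := h
      _ = (a - b) / (1 - a ^ 2) * l ^ i := by ring
  -- main strict inequality T
  have hCl : 0 < C * l ^ (n + 1) := by positivity
  have hT : (a - b) * G < l ^ (n + 1) * b * (1 - a ^ 2) := by
    have hd : D3 - D2 = l ^ (n + 1) * (l * (1 - l)) := by
      simp only [hD2, hD3]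
      rw [show n + 3 = n + 1 + 1 + 1 by omega, show n + 2 = n + 1 + 1 by omega,
        pow_succ, pow_succ, pow_succ]
      ring
    have hL : (a - b) * G * (D2 * D3) = (C * l ^ (n + 1)) * (l * (1 - l ^ (n + 1))) := by
      have h1 : (a - b) * (D2 * D3) = C * (D3 - D2) := by
        linear_combination D3 * haD - D2 * hbD
      linear_combination G * h1 + C * G * hd + C * l ^ (n + 1) * l * hG1
    have hR : (l ^ (n + 1) * b * (1 - a ^ 2)) * (D2 * D3)
        = (C * l ^ (n + 1)) * (D2 * (1 - a ^ 2)) := by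
      linear_combination l ^ (n + 1) * (1 - a ^ 2) * D2 * hbD
    have hfinal : (a - b) * G * (D2 * D3) < (l ^ (n + 1) * b * (1 - a ^ 2)) * (D2 * D3) := by
      rw [hL, hR]
      exact mul_lt_mul_of_pos_left hK hCl
    exact lt_of_mul_lt_mul_right hfinal (mul_pos hD2p hD3p).le
  -- tan lower bound on the extra term
  have hbsmall : l ^ (n + 1) * b < π / 2 := by
    have hli1 : l ^ (n + 1) ≤ 1 := pow_le_one₀ hl0.le hl1.le
    have hb6 : b ≤ π / 6 := hba.trans ha6
    nlinarith [pow_pos hl0 (n + 1)]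
  have htanlb : l ^ (n + 1) * b ≤ Real.tan (l ^ (n + 1) * b) :=
    (Real.lt_tan (by positivity) hbsmall).le
  -- conclude
  have hsplit : S (n + 1) b = S n b + Real.tan (l ^ (n + 1) * b) := by
    simp only [S]
    rw [Finset.sum_range_succ]
  rw [hsplit]
  have hfin : (a - b) / (1 - a ^ 2) * G < l ^ (n + 1) * b := by
    rw [div_mul_eq_mul_div, div_lt_iff₀ ha2]
    calc (a - b) * G < l ^ (n + 1) * b * (1 - a ^ 2) := hT
      _ = _ := by ring
  linarith
end

section
/- The equation Σ_{i=0}^{∞} tan((π/2)·λ^{i+1}(1 − λ)) = 1 has a unique solution λ₁ in (0,1): the function λ ↦ Σ_{i=0}^{∞} tan((π/2)·λ^{i+1}(1 − λ)) is continuous on (0,1), tends to 0 as λ → 0⁺, and exceeds 1 for λ close to 1. -/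
open Real Filter

namespace Stmt13Aux

/-- The summand's argument. -/
noncomputable def a (l : ℝ) (i : ℕ) : ℝ := (π / 2) * l ^ (i + 1) * (1 - l)

lemma a_nonneg {l : ℝ} (h0 : 0 ≤ l) (h1 : l ≤ 1) (i : ℕ) : 0 ≤ a l i := by
  have hπ := Real.pi_pos
  have : (0:ℝ) ≤ 1 - l := by linarith
  unfold a
  positivity

lemma a_le {l : ℝ} (h0 : 0 ≤ l) (h1 : l ≤ 1) (i : ℕ) : a l i ≤ π / 8 := by
  have hπ := Real.pi_pos
  have h2 : l ^ (i + 1) ≤ l ^ 1 := pow_le_pow_of_le_one h0 h1 (by omega)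
  have h3 : l ^ (i+1) * (1 - l) ≤ l * (1 - l) := by
    have : (0:ℝ) ≤ 1 - l := by linarith
    have := mul_le_mul_of_nonneg_right h2 this
    simpa using this
  have h4 : l * (1 - l) ≤ 1/4 := by nlinarith [sq_nonneg (l - 1/2)]
  have : l ^ (i+1) * (1 - l) ≤ 1/4 := le_trans h3 h4
  calc a l i = (π/2) * (l ^ (i+1) * (1 - l)) := by unfold a; ring
    _ ≤ (π/2) * (1/4) := by
        apply mul_le_mul_of_nonneg_left this (by positivity)
    _ = π / 8 := by ring

lemma a_lt_pi_div_two {l : ℝ} (h0 : 0 ≤ l) (h1 : l ≤ 1) (i : ℕ) : a l i < π / 2 := by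
  have := a_le h0 h1 i
  have hπ := Real.pi_pos
  linarith

lemma cos_sq_half {t : ℝ} (h0 : 0 ≤ t) (h1 : t ≤ π/4) : 1/2 ≤ Real.cos t ^ 2 := by
  have hπ := Real.pi_pos
  have h2 : Real.cos (π/4) ≤ Real.cos t :=
    Real.cos_le_cos_of_nonneg_of_le_pi h0 (by linarith) h1
  rw [Real.cos_pi_div_four] at h2
  have hs : (0:ℝ) ≤ √2 / 2 := by positivity
  have : (√2/2)^2 ≤ Real.cos t ^ 2 := by
    apply sq_le_sq' _ h2
    nlinarith
  have h22 : (√2/2)^2 = 1/2 := by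
    rw [div_pow, Real.sq_sqrt (by norm_num : (0:ℝ) ≤ 2)]
    norm_num
  linarith [h22 ▸ this]

lemma cos_pos_of_le_pi_div_four {t : ℝ} (h0 : 0 ≤ t) (h1 : t ≤ π/4) : 0 < Real.cos t := by
  have hπ := Real.pi_pos
  exact Real.cos_pos_of_mem_Ioo ⟨by linarith, by linarith⟩

/-- `2 t - tan t` is monotone on `[0, π/4]`. -/
lemma mono_two_sub_tan : MonotoneOn (fun t : ℝ => 2 * t - Real.tan t) (Set.Icc 0 (π/4)) := by
  have hπ := Real.pi_pos
  apply monotoneOn_of_deriv_nonneg (convex_Icc _ _)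
  · apply ContinuousOn.sub
    · fun_prop
    · intro t ht
      exact ((Real.continuousAt_tan.2 (cos_pos_of_le_pi_div_four ht.1 ht.2).ne')).continuousWithinAt
  · intro t ht
    rw [interior_Icc] at ht
    have hc := cos_pos_of_le_pi_div_four ht.1.le ht.2.le
    exact (((hasDerivAt_id t).const_mul 2).sub (Real.hasDerivAt_tan hc.ne')).differentiableAt.differentiableWithinAt
  · intro t ht
    rw [interior_Icc] at ht
    have hc := cos_pos_of_le_pi_div_four ht.1.le ht.2.le
    have hD : HasDerivAt (fun t : ℝ => 2 * t - Real.tan t) (2 * 1 - 1 / Real.cos t ^ 2) t :=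
      ((hasDerivAt_id t).const_mul 2).sub (Real.hasDerivAt_tan hc.ne')
    rw [hD.deriv]
    have hsq := cos_sq_half ht.1.le ht.2.le
    have hsq' : (0:ℝ) < Real.cos t ^ 2 := by positivity
    rw [sub_nonneg]
    rw [div_le_iff₀ hsq']
    nlinarith

/-- `tan t - t` is monotone on `[0, π/4]`. -/
lemma mono_tan_sub : MonotoneOn (fun t : ℝ => Real.tan t - t) (Set.Icc 0 (π/4)) := by
  have hπ := Real.pi_pos
  apply monotoneOn_of_deriv_nonneg (convex_Icc _ _)
  · apply ContinuousOn.sub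
    · intro t ht
      exact ((Real.continuousAt_tan.2 (cos_pos_of_le_pi_div_four ht.1 ht.2).ne')).continuousWithinAt
    · fun_prop
  · intro t ht
    rw [interior_Icc] at ht
    have hc := cos_pos_of_le_pi_div_four ht.1.le ht.2.le
    exact ((Real.hasDerivAt_tan hc.ne').sub (hasDerivAt_id t)).differentiableAt.differentiableWithinAt
  · intro t ht
    rw [interior_Icc] at ht
    have hc := cos_pos_of_le_pi_div_four ht.1.le ht.2.le
    have hD : HasDerivAt (fun t : ℝ => Real.tan t - t) (1 / Real.cos t ^ 2 - 1) t :=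
      (Real.hasDerivAt_tan hc.ne').sub (hasDerivAt_id t)
    rw [hD.deriv]
    have hsq : Real.cos t ^ 2 ≤ 1 := Real.cos_sq_le_one t
    have hsq' : (0:ℝ) < Real.cos t ^ 2 := by positivity
    rw [sub_nonneg, le_div_iff₀ hsq']
    linarith

/-- Lipschitz upper bound for tan on `[0,π/4]`. -/
lemma tan_sub_le {x y : ℝ} (h0 : 0 ≤ x) (hxy : x ≤ y) (hy : y ≤ π/4) :
    Real.tan y - Real.tan x ≤ 2 * (y - x) := by
  have := mono_two_sub_tan ⟨h0, le_trans hxy hy⟩ ⟨le_trans h0 hxy, hy⟩ hxy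
  simp only at this
  linarith

/-- Lower bound: tan grows at least linearly on `[0,π/4]`. -/
lemma le_tan_sub {x y : ℝ} (h0 : 0 ≤ x) (hxy : x ≤ y) (hy : y ≤ π/4) :
    y - x ≤ Real.tan y - Real.tan x := by
  have := mono_tan_sub ⟨h0, le_trans hxy hy⟩ ⟨le_trans h0 hxy, hy⟩ hxy
  simp only at this
  linarith

lemma tan_le_two_mul {x : ℝ} (h0 : 0 ≤ x) (hx : x ≤ π/4) : Real.tan x ≤ 2 * x := by
  have := tan_sub_le (le_refl 0) h0 hx
  simpa [Real.tan_zero] using this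

lemma summable_a {l : ℝ} (h0 : 0 ≤ l) (h1 : l < 1) : Summable (a l) := by
  have : ∀ i, a l i = ((π/2) * (1 - l) * l) * l ^ i := by
    intro i; unfold a; ring
  exact Summable.congr (((summable_geometric_of_lt_one h0 h1).mul_left _)) (fun i => (this i).symm)

lemma tsum_a {l : ℝ} (h0 : 0 ≤ l) (h1 : l < 1) : ∑' i, a l i = (π/2) * l := by
  have h : ∀ i, a l i = ((π/2) * (1 - l) * l) * l ^ i := by
    intro i; unfold a; ring
  rw [tsum_congr h, tsum_mul_left, tsum_geometric_of_lt_one h0 h1]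
  have : (1:ℝ) - l ≠ 0 := by linarith
  field_simp

lemma a_le_quarter_pi {l : ℝ} (h0 : 0 ≤ l) (h1 : l ≤ 1) (i : ℕ) : a l i ≤ π/4 := by
  have := a_le h0 h1 i
  have hπ := Real.pi_pos
  linarith

lemma tan_a_nonneg {l : ℝ} (h0 : 0 ≤ l) (h1 : l ≤ 1) (i : ℕ) : 0 ≤ Real.tan (a l i) :=
  Real.tan_nonneg_of_nonneg_of_le_pi_div_two (a_nonneg h0 h1 i) (a_lt_pi_div_two h0 h1 i).le

lemma tan_a_le {l : ℝ} (h0 : 0 ≤ l) (h1 : l ≤ 1) (i : ℕ) : Real.tan (a l i) ≤ 2 * a l i :=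
  tan_le_two_mul (a_nonneg h0 h1 i) (a_le_quarter_pi h0 h1 i)

lemma a_le_tan {l : ℝ} (h0 : 0 ≤ l) (h1 : l ≤ 1) (i : ℕ) : a l i ≤ Real.tan (a l i) :=
  Real.le_tan (a_nonneg h0 h1 i) (a_lt_pi_div_two h0 h1 i)

lemma summable_tan_a {l : ℝ} (h0 : 0 ≤ l) (h1 : l < 1) :
    Summable (fun i => Real.tan (a l i)) := by
  apply Summable.of_nonneg_of_le (tan_a_nonneg h0 h1.le) (tan_a_le h0 h1.le)
  exact (summable_a h0 h1).mul_left 2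

/-- The sum, as used in the statement. -/
lemma lower_bound {l : ℝ} (h0 : 0 < l) (h1 : l < 1) :
    (π/2) * l < ∑' i, Real.tan (a l i) := by
  have key : ∑' i, a l i < ∑' i, Real.tan (a l i) := by
    apply Summable.tsum_lt_tsum (i := 0) (a_le_tan h0.le h1.le)
      _ (summable_a h0.le h1) (summable_tan_a h0.le h1)
    have ha0 : 0 < a l 0 := by
      have hπ := Real.pi_pos
      unfold a
      have : (0:ℝ) < 1 - l := by linarith
      positivity
    exact Real.lt_tan ha0 (a_lt_pi_div_two h0.le h1.le 0)
  rwa [tsum_a h0.le h1] at key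

lemma upper_bound {l : ℝ} (h0 : 0 ≤ l) (h1 : l < 1) :
    ∑' i, Real.tan (a l i) ≤ π * l := by
  have h2 : ∑' i, Real.tan (a l i) ≤ ∑' i, 2 * a l i :=
    Summable.tsum_le_tsum (tan_a_le h0 h1.le) (summable_tan_a h0 h1) ((summable_a h0 h1).mul_left 2)
  have h3 : ∑' i, 2 * a l i = 2 * ((π/2) * l) := by
    rw [tsum_mul_left, tsum_a h0 h1]
  calc ∑' i, Real.tan (a l i) ≤ 2 * ((π/2) * l) := by rw [← h3]; exact h2
    _ = π * l := by ring

/-- Monotonicity of `t^n (1-t)` on `[0,2/3]` for `n ≥ 2`. -/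
lemma pow_one_sub_mono {n : ℕ} (hn : 2 ≤ n) {x y : ℝ} (hx : 0 ≤ x) (hxy : x ≤ y)
    (hy : y ≤ 2/3) : x ^ n * (1 - x) ≤ y ^ n * (1 - y) := by
  have key : MonotoneOn (fun t : ℝ => t ^ n - t ^ (n+1)) (Set.Icc 0 (2/3)) := by
    apply monotoneOn_of_deriv_nonneg (convex_Icc _ _)
    · fun_prop
    · intro t ht
      exact ((hasDerivAt_pow n t).sub (hasDerivAt_pow (n+1) t)).differentiableAt.differentiableWithinAt
    · intro t ht
      rw [interior_Icc] at ht
      have hD : HasDerivAt (fun t : ℝ => t ^ n - t ^ (n+1))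
          ((n : ℝ) * t ^ (n-1) - ((n+1 : ℕ) : ℝ) * t ^ (n+1-1)) t :=
        (hasDerivAt_pow n t).sub (hasDerivAt_pow (n+1) t)
      rw [hD.deriv]
      have ht0 : 0 < t := ht.1
      have ht1 : t < 2/3 := ht.2
      have hpow : t ^ n = t ^ (n-1) * t := by
        rw [← pow_succ]
        congr 1
        omega
      have h1 : (n+1-1) = n := by omega
      rw [h1, hpow]
      have hfac : (n:ℝ) * t ^ (n-1) - ((n+1:ℕ):ℝ) * (t ^ (n-1) * t)
          = t ^ (n-1) * ((n:ℝ) - ((n:ℝ)+1) * t) := by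
        push_cast
        ring
      rw [hfac]
      apply mul_nonneg (by positivity)
      have hn' : (2:ℝ) ≤ (n:ℝ) := by exact_mod_cast hn
      nlinarith
  have := key ⟨hx, le_trans hxy hy⟩ ⟨le_trans hx hxy, hy⟩ hxy
  simp only at this
  nlinarith [pow_nonneg hx n, pow_nonneg (le_trans hx hxy) n,
    pow_succ x n, pow_succ y n]

lemma a_mono_tail {x y : ℝ} (hx : 0 ≤ x) (hxy : x ≤ y) (hy : y ≤ 2/3) (i : ℕ) :
    a x (i+1) ≤ a y (i+1) := by
  have hπ := Real.pi_pos
  have := pow_one_sub_mono (n := i + 2) (by omega) hx hxy hy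
  have h2 : a x (i+1) = (π/2) * (x ^ (i+2) * (1 - x)) := by unfold a; ring
  have h3 : a y (i+1) = (π/2) * (y ^ (i+2) * (1 - y)) := by unfold a; ring
  rw [h2, h3]
  apply mul_le_mul_of_nonneg_left this (by positivity)

/-- Strict monotonicity of the sum on `(0, 2/3]`. -/
lemma strict_mono_small {x y : ℝ} (hx : 0 < x) (hxy : x < y) (hy : y ≤ 2/3) :
    ∑' i, Real.tan (a x i) < ∑' i, Real.tan (a y i) := by
  have hπ := Real.pi_pos
  have hx1 : x < 1 := by linarith
  have hy1 : y < 1 := by linarith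
  have Sx := summable_tan_a hx.le hx1
  have Sy := summable_tan_a (by linarith : (0:ℝ) ≤ y) hy1
  have Ax := summable_a hx.le hx1
  have Ay := summable_a (by linarith : (0:ℝ) ≤ y) hy1
  -- difference sequences
  set d : ℕ → ℝ := fun i => Real.tan (a y i) - Real.tan (a x i) with hd
  set Δ : ℕ → ℝ := fun i => a y i - a x i with hΔ
  have Sd : Summable d := Sy.sub Sx
  have SΔ : Summable Δ := Ay.sub Ax
  have htsum_d : ∑' i, d i = (∑' i, Real.tan (a y i)) - ∑' i, Real.tan (a x i) :=
    Summable.tsum_sub Sy Sx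
  have htsumΔ : ∑' i, Δ i = (π/2) * (y - x) := by
    rw [show (∑' i, Δ i) = (∑' i, a y i) - ∑' i, a x i from Summable.tsum_sub Ay Ax,
      tsum_a (by linarith) hy1, tsum_a hx.le hx1]
    ring
  -- termwise bound on the tail
  have htail : ∀ i, Δ (i+1) ≤ d (i+1) := by
    intro i
    have hmono := a_mono_tail hx.le hxy.le hy i
    have := le_tan_sub (a_nonneg hx.le hx1.le (i+1)) hmono
      (a_le_quarter_pi (by linarith) hy1.le (i+1))
    simp only [hd, hΔ]
    linarith
  -- bound on the first term
  have hΔ0 : Δ 0 = (π/2) * (y - x) * (1 - x - y) := by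
    simp only [hΔ]
    unfold a
    ring
  have hfirst : Δ 0 - (π/2) * (y - x) / 3 ≤ d 0 := by
    rcases le_or_gt (a x 0) (a y 0) with hle | hlt
    · have := le_tan_sub (a_nonneg hx.le hx1.le 0) hle
        (a_le_quarter_pi (by linarith) hy1.le 0)
      simp only [hd, hΔ]
      have hr : 0 ≤ (π/2) * (y - x) / 3 := by
        have : (0:ℝ) ≤ y - x := by linarith
        positivity
      linarith
    · have h2 := tan_sub_le (a_nonneg (by linarith : (0:ℝ) ≤ y) hy1.le 0) hlt.le
        (a_le_quarter_pi hx.le hx1.le 0)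
      -- d 0 ≥ 2 * Δ 0
      have hΔ0lb : -((π/2) * (y - x) / 3) ≤ Δ 0 := by
        rw [hΔ0]
        nlinarith [mul_nonneg (mul_nonneg (by positivity : (0:ℝ) ≤ π/2)
          (by linarith : (0:ℝ) ≤ y - x)) (by linarith : (0:ℝ) ≤ 4/3 - x - y)]
      simp only [hd, hΔ] at *
      nlinarith
  -- assemble
  have hsplit_d : ∑' i, d i = d 0 + ∑' i, d (i+1) := Summable.tsum_eq_zero_add Sd
  have hsplitΔ : ∑' i, Δ i = Δ 0 + ∑' i, Δ (i+1) := Summable.tsum_eq_zero_add SΔ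
  have hSd' : Summable (fun i => d (i+1)) := (summable_nat_add_iff 1).2 Sd
  have hSΔ' : Summable (fun i => Δ (i+1)) := (summable_nat_add_iff 1).2 SΔ
  have htail_sum : ∑' i, Δ (i+1) ≤ ∑' i, d (i+1) := Summable.tsum_le_tsum htail hSΔ' hSd'
  have hlb : (π/2) * (y - x) - (π/2) * (y - x) / 3 ≤ ∑' i, d i := by
    have : ∑' i, Δ i - (π/2) * (y - x) / 3 ≤ ∑' i, d i := by
      rw [hsplit_d, hsplitΔ]
      linarith
    linarith [htsumΔ ▸ this]
  have hpos : 0 < ∑' i, d i := by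
    have hyx : 0 < y - x := by linarith
    nlinarith
  linarith [htsum_d ▸ hpos]

/-- Continuity of the sum on `(0,1)`. -/
lemma contOn : ContinuousOn (fun l => ∑' i, Real.tan (a l i)) (Set.Ioo (0:ℝ) 1) := by
  intro x hx
  apply ContinuousAt.continuousWithinAt
  set b : ℝ := (x + 1) / 2 with hb
  have hb0 : 0 < b := by have := hx.1; simp only [hb]; linarith
  have hb1 : b < 1 := by have := hx.2; simp only [hb]; linarith
  have hxb : x < b := by have := hx.2; simp only [hb]; linarith
  have key : ContinuousOn (fun l => ∑' i, Real.tan (a l i)) (Set.Ioo 0 b) := by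
    apply continuousOn_tsum (u := fun i => π * b ^ (i+1))
    · intro i l hl
      apply ContinuousAt.continuousWithinAt
      have hl1 : l < 1 := lt_trans hl.2 hb1
      have hcos : Real.cos (a l i) ≠ 0 := by
        have := cos_pos_of_le_pi_div_four (a_nonneg hl.1.le hl1.le i)
          (a_le_quarter_pi hl.1.le hl1.le i)
        exact this.ne'
      have hc1 : ContinuousAt Real.tan (a l i) := Real.continuousAt_tan.2 hcos
      have hc2 : ContinuousAt (fun l : ℝ => a l i) l := by
        unfold a
        fun_prop
      exact ContinuousAt.comp (g := Real.tan) (f := fun l : ℝ => a l i) hc1 hc2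
    · have h : Summable (fun i : ℕ => (π * b) * b ^ i) :=
        (summable_geometric_of_lt_one hb0.le hb1).mul_left _
      exact h.congr (fun i => by rw [pow_succ]; ring)
    · intro i l hl
      have hl1 : l < 1 := lt_trans hl.2 hb1
      rw [Real.norm_eq_abs, abs_of_nonneg (tan_a_nonneg hl.1.le hl1.le i)]
      have h1 : Real.tan (a l i) ≤ 2 * a l i := tan_a_le hl.1.le hl1.le i
      have h2 : 2 * a l i ≤ π * b ^ (i+1) := by
        have hπ := Real.pi_pos
        have hp1 : l ^ (i+1) ≤ b ^ (i+1) := pow_le_pow_left₀ hl.1.le hl.2.le (i+1)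
        have hp2 : l ^ (i+1) * (1 - l) ≤ b ^ (i+1) := by
          have h1l : 1 - l ≤ 1 := by have := hl.1; linarith
          have hp0 : (0:ℝ) ≤ l ^ (i+1) := pow_nonneg hl.1.le _
          nlinarith
        calc 2 * a l i = π * (l ^ (i+1) * (1 - l)) := by unfold a; ring
          _ ≤ π * b ^ (i+1) := by nlinarith
      linarith
  exact key.continuousAt (Ioo_mem_nhds hx.1 hxb)

end Stmt13Aux

open Stmt13Aux in
/-- The function `G(λ) = Σ_{i=0}^∞ tan((π/2) λ^{i+1} (1−λ))` is continuous on
`(0,1)`, tends to `0` as `λ → 0⁺`, exceeds `1` for `λ` close to `1`, and the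
equation `G(λ) = 1` has a unique solution `λ₁ ∈ (0,1)`. -/
theorem stmt_13 :
    let G : ℝ → ℝ := fun l => ∑' i : ℕ, Real.tan ((π / 2) * l ^ (i + 1) * (1 - l))
    ContinuousOn G (Set.Ioo 0 1) ∧
    Tendsto G (nhdsWithin 0 (Set.Ioi 0)) (nhds 0) ∧
    (∃ a ∈ Set.Ioo (0 : ℝ) 1, ∀ l ∈ Set.Ioo a 1, 1 < G l) ∧
    ∃! l₁ : ℝ, l₁ ∈ Set.Ioo (0 : ℝ) 1 ∧ G l₁ = 1 := by
  intro G
  have hπ := Real.pi_pos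
  have hπ3 : (3.14 : ℝ) < π := Real.pi_gt_d2
  have hGa : G = fun l => ∑' i, Real.tan (a l i) := rfl
  -- big lower-bound fact: solutions and large values
  have hbig : ∀ l : ℝ, 0 < l → l < 1 → (π/2) * l < G l := by
    intro l h0 h1
    rw [hGa]
    exact lower_bound h0 h1
  have hcont : ContinuousOn G (Set.Ioo 0 1) := by rw [hGa]; exact contOn
  have htend : Tendsto G (nhdsWithin 0 (Set.Ioi 0)) (nhds 0) := by
    have hmem : Set.Ioo (0:ℝ) 1 ∈ nhdsWithin 0 (Set.Ioi 0) :=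
      Ioo_mem_nhdsGT_of_mem ⟨le_refl 0, one_pos⟩
    have h0 : Tendsto (fun _ : ℝ => (0:ℝ)) (nhdsWithin 0 (Set.Ioi 0)) (nhds 0) :=
      tendsto_const_nhds
    have hπl : Tendsto (fun l : ℝ => π * l) (nhdsWithin 0 (Set.Ioi 0)) (nhds 0) := by
      have : Tendsto (fun l : ℝ => π * l) (nhds 0) (nhds (π * 0)) :=
        (continuous_const.mul continuous_id).tendsto 0
      rw [mul_zero] at this
      exact this.mono_left nhdsWithin_le_nhds
    apply tendsto_of_tendsto_of_tendsto_of_le_of_le' h0 hπl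
    · filter_upwards [hmem] with l hl
      rw [hGa]
      exact tsum_nonneg (tan_a_nonneg hl.1.le hl.2.le)
    · filter_upwards [hmem] with l hl
      rw [hGa]
      exact upper_bound hl.1.le hl.2
  have hexceed : ∀ l : ℝ, 0.64 < l → l < 1 → 1 < G l := by
    intro l hl0 hl1
    have h0 : 0 < l := by linarith
    have := hbig l h0 hl1
    nlinarith
  refine ⟨hcont, htend, ⟨0.64, ⟨by norm_num, by norm_num⟩, fun l hl => hexceed l hl.1 hl.2⟩, ?_⟩
  -- existence via IVT
  have hev1 : ∀ᶠ l in nhdsWithin (0:ℝ) (Set.Ioi 0), G l < 1 :=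
    htend.eventually_lt_const one_pos
  have hev2 : Set.Ioo (0:ℝ) (1/2) ∈ nhdsWithin (0:ℝ) (Set.Ioi 0) :=
    Ioo_mem_nhdsGT_of_mem ⟨le_refl 0, by norm_num⟩
  obtain ⟨ε, hε1, hε2⟩ := (hev1.and (eventually_of_mem hev2 (fun x hx => hx))).exists
  have hε0 : 0 < ε := hε2.1
  have hεhalf : ε < 1/2 := hε2.2
  have hsub : Set.Icc ε (0.66 : ℝ) ⊆ Set.Ioo (0:ℝ) 1 := by
    intro t ht
    exact ⟨lt_of_lt_of_le hε0 ht.1, lt_of_le_of_lt ht.2 (by norm_num)⟩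
  have hIVT := intermediate_value_Icc (by linarith : ε ≤ (0.66:ℝ)) (hcont.mono hsub)
  have hG66 : 1 < G 0.66 := hexceed 0.66 (by norm_num) (by norm_num)
  have h1mem : (1:ℝ) ∈ Set.Icc (G ε) (G 0.66) := ⟨hε1.le, hG66.le⟩
  obtain ⟨l₁, hl₁mem, hGl₁⟩ := hIVT h1mem
  have hl₁Ioo : l₁ ∈ Set.Ioo (0:ℝ) 1 := hsub hl₁mem
  -- any solution is < 2/3
  have hsol_lt : ∀ l : ℝ, l ∈ Set.Ioo (0:ℝ) 1 → G l = 1 → l < 2/3 := by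
    intro l hl hGl
    have := hbig l hl.1 hl.2
    rw [hGl] at this
    nlinarith
  refine ⟨l₁, ⟨hl₁Ioo, hGl₁⟩, ?_⟩
  rintro l ⟨hlmem, hGl⟩
  have hl23 : l < 2/3 := hsol_lt l hlmem hGl
  have hl₁23 : l₁ < 2/3 := hsol_lt l₁ hl₁Ioo hGl₁
  rcases lt_trichotomy l l₁ with h | h | h
  · exfalso
    have h2 : G l < G l₁ := strict_mono_small hlmem.1 h hl₁23.le
    rw [hGl, hGl₁] at h2
    exact lt_irrefl 1 h2
  · exact h
  · exfalso
    have h2 : G l₁ < G l := strict_mono_small hl₁Ioo.1 h hl23.le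
    rw [hGl, hGl₁] at h2
    exact lt_irrefl 1 h2
end

section
/- For n ≥ 1 and λ ∈ (0,1), with θ_n = (π/2)·λ(1 − λ)/(1 − λ^{n+2}), the quantity γ₂(λⁿθ_n) = cot(λⁿθ_n)·cot(λ(π/2 − λⁿθ_n)) is strictly greater than 1. -/
open Real

private lemma cot_eq_inv_tan {x : ℝ} : Real.cot x = (Real.tan x)⁻¹ := by
  rw [Real.cot_eq_cos_div_sin, Real.tan_eq_sin_div_cos, inv_div]

/-- For `n ≥ 1`, `λ ∈ (0,1)` and `θ_n = (π/2) λ(1−λ)/(1−λ^{n+2})`, one has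
`γ₂(λⁿθ_n) = cot(λⁿθ_n) · cot(λ(π/2 − λⁿθ_n)) > 1`. -/
theorem stmt_15 (n : ℕ) (hn : 1 ≤ n) (l : ℝ) (hl0 : 0 < l) (hl1 : l < 1) :
    let θ : ℝ := (π / 2) * l * (1 - l) / (1 - l ^ (n + 2))
    1 < Real.cot (l ^ n * θ) * Real.cot (l * (π / 2 - l ^ n * θ)) := by
  intro θ
  have hpi := pi_pos
  have hln : (0:ℝ) < l ^ n := pow_pos hl0 n
  have hln1 : l ^ n < 1 := pow_lt_one₀ hl0.le hl1 (by omega)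
  have hln2 : l ^ (n + 2) < 1 := pow_lt_one₀ hl0.le hl1 (by omega)
  have hθ0 : 0 < θ := by
    exact div_pos (mul_pos (mul_pos (by linarith) hl0) (by linarith)) (by linarith)
  -- θ < π/2
  have hkey : l * (1 - l) < 1 - l ^ (n + 2) := by
    have h2 : l ^ (n + 2) ≤ l ^ 2 := pow_le_pow_of_le_one hl0.le hl1.le (by omega)
    nlinarith
  have hθ : θ < π / 2 := by
    rw [div_lt_iff₀ (by linarith)]
    have : (π / 2) * (l * (1 - l)) < (π / 2) * (1 - l ^ (n + 2)) := by
      apply mul_lt_mul_of_pos_left hkey (by linarith)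
    nlinarith
  set a : ℝ := l ^ n * θ with ha
  have ha0 : 0 < a := mul_pos hln hθ0
  have haθ : a < π / 2 := by
    calc a ≤ θ := by nlinarith
    _ < π / 2 := hθ
  set b : ℝ := l * (π / 2 - a) with hb
  have hb0 : 0 < b := mul_pos hl0 (by linarith)
  have hblt : b < π / 2 - a := by
    have : b < 1 * (π / 2 - a) := by
      apply mul_lt_mul_of_pos_right hl1 (by linarith)
    linarith
  have hta : 0 < Real.tan a := tan_pos_of_pos_of_lt_pi_div_two ha0 haθ
  have htb : 0 < Real.tan b := tan_pos_of_pos_of_lt_pi_div_two hb0 (by linarith)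
  have htlt : Real.tan b < Real.tan (π / 2 - a) :=
    tan_lt_tan_of_lt_of_lt_pi_div_two (by linarith) (by linarith) hblt
  rw [Real.tan_pi_div_two_sub] at htlt
  have hmul : Real.tan a * Real.tan b < 1 := by
    have := mul_lt_mul_of_pos_left htlt hta
    rwa [mul_inv_cancel₀ (ne_of_gt hta)] at this
  rw [cot_eq_inv_tan, cot_eq_inv_tan, ← mul_inv]
  rw [lt_inv_comm₀ one_pos (by positivity)]
  simpa using hmul
end

section
/- Let λ ∈ (0,1), θ_λ = πλ/(2(1+λ)), s_λ = 1/(1 + tan θ_λ), and f₂(s, θ) = ((1 − s) cot θ, λ(π/2 − θ)). Then the Jacobian matrix of f₂ at (s_λ, θ_λ) is lower/upper triangular with eigenvalues −cot θ_λ (of modulus > 1 since θ_λ < π/4) and −λ (of modulus < 1); hence the fixed point p_λ is hyperbolic of saddle type. -/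
open Real

set_option maxHeartbeats 1000000

lemma my_hasDerivAt_cot {x : ℝ} (h : Real.sin x ≠ 0) :
    HasDerivAt Real.cot (-(1 / Real.sin x ^ 2)) x := by
  have h1 : HasDerivAt (fun y => Real.cos y / Real.sin y)
      ((-Real.sin x * Real.sin x - Real.cos x * Real.cos x) / Real.sin x ^ 2) x :=
    (Real.hasDerivAt_cos x).div (Real.hasDerivAt_sin x) h
  have hfun : (fun y => Real.cos y / Real.sin y) = Real.cot := by
    funext y; rw [Real.cot_eq_cos_div_sin]
  rw [hfun] at h1
  convert h1 using 1
  have := Real.sin_sq_add_cos_sq x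
  field_simp
  nlinarith [this]

/-- For `λ ∈ (0,1)`, `θ_λ = πλ/(2(1+λ))`, `s_λ = 1/(1 + tan θ_λ)`, the Jacobian of
`f₂(s, θ) = ((1 − s) cot θ, λ(π/2 − θ))` at `(s_λ, θ_λ)` is the triangular matrix
`[[−cot θ_λ, −(1 − s_λ)/sin² θ_λ], [0, −λ]]`, whose eigenvalues are `−cot θ_λ`
(of modulus `> 1`, since `θ_λ < π/4`) and `−λ` (of modulus `< 1`); in particular
the fixed point `p_λ` is a hyperbolic saddle. -/
theorem stmt_18 (l : ℝ) (hl0 : 0 < l) (hl1 : l < 1) :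
    let θl : ℝ := π * l / (2 * (1 + l))
    let sl : ℝ := 1 / (1 + Real.tan θl)
    let f₂ : ℝ × ℝ → ℝ × ℝ := fun p => ((1 - p.1) * Real.cot p.2, l * (π / 2 - p.2))
    ∃ L : ℝ × ℝ →L[ℝ] ℝ × ℝ,
      (∀ u v : ℝ, L (u, v) =
        (-Real.cot θl * u + (-(1 - sl) / Real.sin θl ^ 2) * v, -l * v)) ∧
      HasFDerivAt f₂ L (sl, θl) ∧
      L (1, 0) = (-Real.cot θl) • ((1 : ℝ), (0 : ℝ)) ∧
      (∃ v : ℝ × ℝ, v ≠ 0 ∧ L v = (-l) • v) ∧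
      θl < π / 4 ∧ 1 < |(-Real.cot θl)| ∧ |(-l)| < 1 := by
  intro θl sl f₂
  have hpi := Real.pi_pos
  have hθ0 : 0 < θl := by
    apply div_pos (by positivity) (by linarith)
  have hθ4 : θl < π / 4 := by
    rw [div_lt_div_iff₀ (by linarith) (by norm_num)]
    nlinarith
  have hθπ2 : θl < π / 2 := by linarith
  have hsin : Real.sin θl ≠ 0 :=
    ne_of_gt (Real.sin_pos_of_pos_of_lt_pi hθ0 (by linarith))
  have htanpos : 0 < Real.tan θl := Real.tan_pos_of_pos_of_lt_pi_div_two hθ0 hθπ2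
  have htanlt : Real.tan θl < 1 := by
    have := Real.tan_lt_tan_of_nonneg_of_lt_pi_div_two hθ0.le (by linarith) hθ4
    rwa [Real.tan_pi_div_four] at this
  have hcot : Real.cot θl = 1 / Real.tan θl := by
    rw [Real.cot_eq_cos_div_sin, Real.tan_eq_sin_div_cos, one_div_div]
  have hcot1 : 1 < Real.cot θl := by
    rw [hcot]; exact (one_lt_one_div htanpos htanlt)
  -- the derivative
  set a : ℝ := -Real.cot θl with ha
  set b : ℝ := -(1 - sl) / Real.sin θl ^ 2 with hb
  set fst' : ℝ × ℝ →L[ℝ] ℝ := ContinuousLinearMap.fst ℝ ℝ ℝ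
  set snd' : ℝ × ℝ →L[ℝ] ℝ := ContinuousLinearMap.snd ℝ ℝ ℝ
  have hev : ∀ u v : ℝ, ((a • fst' + b • snd').prod ((-l) • snd')) (u, v) =
      (-Real.cot θl * u + (-(1 - sl) / Real.sin θl ^ 2) * v, -l * v) := by
    intro u v
    simp [fst', snd', ha, hb, smul_eq_mul]
  refine ⟨(a • fst' + b • snd').prod ((-l) • snd'), hev, ?_, ?_, ?_, hθ4, ?_, ?_⟩
  · -- HasFDerivAt
    have h1 : HasFDerivAt (fun p : ℝ × ℝ => 1 - p.1) (0 - fst') (sl, θl) :=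
      (hasFDerivAt_const (1 : ℝ) _).sub hasFDerivAt_fst
    have h2 : HasFDerivAt (fun p : ℝ × ℝ => Real.cot p.2)
        ((-(1 / Real.sin θl ^ 2)) • snd') (sl, θl) :=
      by have := HasDerivAt.comp_hasFDerivAt (sl, θl) (my_hasDerivAt_cot (x := θl) hsin) (hasFDerivAt_snd (𝕜 := ℝ) (p := (sl, θl))); exact this
    have hg := h1.mul h2
    have h3 : HasFDerivAt (fun p : ℝ × ℝ => π / 2 - p.2) (0 - snd') (sl, θl) :=
      (hasFDerivAt_const (π / 2) _).sub hasFDerivAt_snd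
    have hh := h3.const_mul l
    have H := HasFDerivAt.prodMk hg hh
    refine H.congr_fderiv ?_
    ext p <;>
      simp [fst', snd', ha, hb, smul_eq_mul] <;> ring
  · rw [hev 1 0]
    simp [Prod.ext_iff, smul_eq_mul, ha]
  · -- eigenvector for -l
    have hal : Real.cot θl - l ≠ 0 := by nlinarith
    refine ⟨(b / (Real.cot θl - l), 1), by simp [Prod.ext_iff], ?_⟩
    rw [hev (b / (Real.cot θl - l)) 1, Prod.smul_mk, Prod.mk.injEq]
    constructor
    · rw [hb, smul_eq_mul]
      field_simp
      ring
    · simp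
  · rw [abs_neg, abs_of_pos (by linarith)]; exact hcot1
  · rw [abs_neg, abs_of_pos hl0]; exact hl1
end
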